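/- arXiv:1609.06937 — 5 statements merged into one kernel-verified Lean document; each statement's English description precedes it below -/
import Mathlib

section
/- Let d ≥ 1, T > 0, and let μ be a signed Borel measure of finite total variation on [0,T]×ℝ^d such that |μ|({0}×ℝ^d) = 0. Then there exists a unique signed Borel measure ρ of finite total variation on [0,T]×ℝ^d (called the resolvent of μ) satisfying ρ + μ = μ*ρ. -/
open MeasureTheory

/-- Convolution of two signed measures (of automatically finite total variation),
defined via the Jordan decomposition and the convolution of finite positive measures;
it satisfies `(smConv μ ν) B = ∫ ν (B - z) μ(dz)`. -/
noncomputable def smConv {E : Type*} [MeasurableSpace E] [AddCommMonoid E]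
    (μ ν : SignedMeasure E) : SignedMeasure E :=
  ((μ.toJordanDecomposition.posPart.conv ν.toJordanDecomposition.posPart +
      μ.toJordanDecomposition.negPart.conv ν.toJordanDecomposition.negPart).toSignedMeasure) -
  ((μ.toJordanDecomposition.posPart.conv ν.toJordanDecomposition.negPart +
      μ.toJordanDecomposition.negPart.conv ν.toJordanDecomposition.posPart).toSignedMeasure)

/-- Convolution in `M(S)`: convolve on the ambient space and restrict back to `S`. -/
noncomputable def smConvOn {E : Type*} [MeasurableSpace E] [AddCommMonoid E]
    (S : Set E) (μ ν : SignedMeasure E) : SignedMeasure E :=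
  (smConv μ ν).restrict S


open Filter Topology
open scoped NNReal ENNReal

section Aux
variable {α : Type*} [MeasurableSpace α]

lemma ts_inj {x y : Measure α} [IsFiniteMeasure x] [IsFiniteMeasure y]
    (h : x.toSignedMeasure = y.toSignedMeasure) : x = y := by
  ext s hs
  have := congrArg (fun v : SignedMeasure α => v s) h
  simp only [Measure.toSignedMeasure_apply_measurable hs] at this
  exact (ENNReal.toReal_eq_toReal_iff' (measure_ne_top _ _) (measure_ne_top _ _)).mp this

lemma ts_sub_eq {x y z w : Measure α} [IsFiniteMeasure x] [IsFiniteMeasure y]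
    [IsFiniteMeasure z] [IsFiniteMeasure w] (h : x + w = z + y) :
    x.toSignedMeasure - y.toSignedMeasure = z.toSignedMeasure - w.toSignedMeasure := by
  ext i hi
  have h' := congrArg (fun m : Measure α => (m i).toReal) h
  simp only [Measure.add_apply,
    ENNReal.toReal_add (measure_ne_top _ _) (measure_ne_top _ _)] at h'
  rw [VectorMeasure.sub_apply, VectorMeasure.sub_apply,
    Measure.toSignedMeasure_apply_measurable hi, Measure.toSignedMeasure_apply_measurable hi,
    Measure.toSignedMeasure_apply_measurable hi, Measure.toSignedMeasure_apply_measurable hi]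
  simp only [measureReal_def]
  linarith

/-- Jordan minimality: if `ν = a - b` then the Jordan parts of `ν` are dominated by `a`, `b`. -/
lemma jordan_le {x y : Measure α} [IsFiniteMeasure x] [IsFiniteMeasure y]
    {ν : SignedMeasure α} (hν : ν = x.toSignedMeasure - y.toSignedMeasure) :
    ν.toJordanDecomposition.posPart ≤ x ∧ ν.toJordanDecomposition.negPart ≤ y := by
  obtain ⟨i, hi₁, hi₂, hi₃, hp, hn⟩ := ν.toJordanDecomposition_spec
  constructor
  · rw [Measure.le_iff]
    intro s hs
    rw [hp, SignedMeasure.toMeasureOfZeroLE_apply _ hi₂ hi₁ hs]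
    have h1 : ν (i ∩ s) ≤ (x (i ∩ s)).toReal := by
      rw [hν, VectorMeasure.sub_apply,
        Measure.toSignedMeasure_apply_measurable (hi₁.inter hs),
        Measure.toSignedMeasure_apply_measurable (hi₁.inter hs)]
      simp [measureReal_def, ENNReal.toReal_nonneg]
    have h2 : (x (i ∩ s)).toReal ≤ (x s).toReal :=
      ENNReal.toReal_mono (measure_ne_top _ _) (measure_mono Set.inter_subset_right)
    rw [← ENNReal.ofReal_eq_coe_nnreal]
    exact ENNReal.ofReal_le_of_le_toReal (h1.trans h2)
  · rw [Measure.le_iff]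
    intro s hs
    rw [hn, SignedMeasure.toMeasureOfLEZero_apply _ hi₃ hi₁.compl hs]
    have h1 : -ν (iᶜ ∩ s) ≤ (y (iᶜ ∩ s)).toReal := by
      rw [hν, VectorMeasure.sub_apply,
        Measure.toSignedMeasure_apply_measurable (hi₁.compl.inter hs),
        Measure.toSignedMeasure_apply_measurable (hi₁.compl.inter hs)]
      simp [measureReal_def, ENNReal.toReal_nonneg]
    have h2 : (y (iᶜ ∩ s)).toReal ≤ (y s).toReal :=
      ENNReal.toReal_mono (measure_ne_top _ _) (measure_mono Set.inter_subset_right)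
    rw [← ENNReal.ofReal_eq_coe_nnreal]
    exact ENNReal.ofReal_le_of_le_toReal (h1.trans h2)

lemma ts_restrict (m : Measure α) [IsFiniteMeasure m] {S : Set α} (hS : MeasurableSet S) :
    (m.restrict S).toSignedMeasure = m.toSignedMeasure.restrict S := by
  ext i hi
  rw [Measure.toSignedMeasure_apply_measurable hi, measureReal_restrict_apply hi,
    VectorMeasure.restrict_apply _ hS hi,
    Measure.toSignedMeasure_apply_measurable (hi.inter hS)]

lemma sm_restrict_sub (x y : SignedMeasure α) {S : Set α} (hS : MeasurableSet S) :
    (x - y).restrict S = x.restrict S - y.restrict S := by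
  ext i hi
  rw [VectorMeasure.restrict_apply _ hS hi, VectorMeasure.sub_apply, VectorMeasure.sub_apply,
    VectorMeasure.restrict_apply _ hS hi, VectorMeasure.restrict_apply _ hS hi]

lemma sum_succ' (f : ℕ → Measure α) :
    Measure.sum f = f 0 + Measure.sum (fun n => f (n + 1)) := by
  ext s hs
  rw [Measure.sum_apply f hs, Measure.add_apply, Measure.sum_apply _ hs]
  exact tsum_eq_zero_add' ENNReal.summable

lemma sum_add_sum' (f g : ℕ → Measure α) :
    Measure.sum f + Measure.sum g = Measure.sum (fun n => f n + g n) := by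
  ext s hs
  rw [Measure.add_apply, Measure.sum_apply _ hs, Measure.sum_apply _ hs, Measure.sum_apply _ hs]
  simp_rw [Measure.add_apply]
  rw [ENNReal.tsum_add]

lemma lint_support_le {S : Set α} (hS : MeasurableSet S) {g : α → ℝ≥0∞}
    (hb : ∀ z ∈ S, g z ≤ 1) {m : Measure α} (hm : m Sᶜ = 0) :
    ∫⁻ z, g z ∂m ≤ m Set.univ := by
  rw [← lintegral_add_compl _ hS (μ := m), Measure.restrict_eq_zero.mpr hm,
    lintegral_zero_measure, add_zero]
  calc ∫⁻ z in S, g z ∂m ≤ ∫⁻ _ in S, 1 ∂m := setLIntegral_mono measurable_const hb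
    _ = m S := setLIntegral_one S
    _ ≤ m Set.univ := measure_mono (Set.subset_univ S)

lemma lint_support_ge {S : Set α} (hS : MeasurableSet S) {g : α → ℝ≥0∞} (hg : Measurable g)
    {C : ℝ≥0∞} (hb : ∀ z ∈ S, C ≤ g z) {m : Measure α} (hm : m Sᶜ = 0) :
    C * m Set.univ ≤ ∫⁻ z, g z ∂m := by
  have huniv : m Set.univ = m S := by
    rw [← measure_add_measure_compl hS, hm, add_zero]
  calc C * m Set.univ = ∫⁻ _ in S, C ∂m := by rw [huniv, setLIntegral_const]
    _ ≤ ∫⁻ z in S, g z ∂m := setLIntegral_mono hg hb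
    _ ≤ ∫⁻ z, g z ∂m := by
        rw [← lintegral_add_compl _ hS (μ := m)]; exact le_self_add

variable [AddCommMonoid α]

lemma jordan_add_eq {a b : Measure α} [IsFiniteMeasure a] [IsFiniteMeasure b]
    {ν : SignedMeasure α} (hν : ν = a.toSignedMeasure - b.toSignedMeasure) :
    ν.toJordanDecomposition.posPart + b = ν.toJordanDecomposition.negPart + a := by
  apply ts_inj
  rw [Measure.toSignedMeasure_add, Measure.toSignedMeasure_add]
  have h0 : ν.toJordanDecomposition.posPart.toSignedMeasure -
      ν.toJordanDecomposition.negPart.toSignedMeasure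
      = a.toSignedMeasure - b.toSignedMeasure := by
    rw [← hν, ← JordanDecomposition.toSignedMeasure, ν.toSignedMeasure_toJordanDecomposition]
  rw [sub_eq_sub_iff_add_eq_add] at h0
  linear_combination (norm := abel) h0

variable [MeasurableAdd₂ α]

lemma conv_sum_right (m : Measure α) [SFinite m] (f : ℕ → Measure α) [∀ n, SFinite (f n)] :
    m.conv (Measure.sum f) = Measure.sum (fun n => m.conv (f n)) := by
  show Measure.map _ _ = _
  rw [Measure.prod_sum_right, Measure.map_sum
    (measurable_add.aemeasurable)]
  rfl

lemma lint_conv {g : α → ℝ≥0∞} (hg : Measurable g) (hmul : ∀ z w, g (z + w) = g z * g w)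
    (m m' : Measure α) [SFinite m] [SFinite m'] :
    ∫⁻ z, g z ∂(m.conv m') = (∫⁻ z, g z ∂m) * ∫⁻ z, g z ∂m' := by
  show ∫⁻ z, g z ∂(Measure.map _ _) = _
  rw [lintegral_map hg measurable_add]
  simp_rw [hmul]
  exact lintegral_prod_mul hg.aemeasurable hg.aemeasurable

lemma smConv_repr (μ : SignedMeasure α) {a b : Measure α}
    [IsFiniteMeasure a] [IsFiniteMeasure b]
    {ν : SignedMeasure α} (hν : ν = a.toSignedMeasure - b.toSignedMeasure) :
    smConv μ ν =
      (μ.toJordanDecomposition.posPart.conv a +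
        μ.toJordanDecomposition.negPart.conv b).toSignedMeasure -
      (μ.toJordanDecomposition.posPart.conv b +
        μ.toJordanDecomposition.negPart.conv a).toSignedMeasure := by
  set P := μ.toJordanDecomposition.posPart
  set N := μ.toJordanDecomposition.negPart
  set p := ν.toJordanDecomposition.posPart
  set n := ν.toJordanDecomposition.negPart
  have key : p + b = n + a := jordan_add_eq hν
  have hP : P.conv p + P.conv b = P.conv n + P.conv a := by
    rw [← Measure.conv_add, ← Measure.conv_add, key]
  have hN : N.conv n + N.conv a = N.conv p + N.conv b := by
    rw [← Measure.conv_add, ← Measure.conv_add, key]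
  apply ts_sub_eq
  calc P.conv p + N.conv n + (P.conv b + N.conv a)
      = (P.conv p + P.conv b) + (N.conv n + N.conv a) := by abel
    _ = (P.conv n + P.conv a) + (N.conv p + N.conv b) := by rw [hP, hN]
    _ = P.conv a + N.conv b + (P.conv n + N.conv p) := by abel

lemma smConvOn_repr (μ : SignedMeasure α) {a b : Measure α}
    [IsFiniteMeasure a] [IsFiniteMeasure b] {S : Set α} (hS : MeasurableSet S)
    {ν : SignedMeasure α} (hν : ν = a.toSignedMeasure - b.toSignedMeasure) :
    smConvOn S μ ν =
      ((μ.toJordanDecomposition.posPart.conv a +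
        μ.toJordanDecomposition.negPart.conv b).restrict S).toSignedMeasure -
      ((μ.toJordanDecomposition.posPart.conv b +
        μ.toJordanDecomposition.negPart.conv a).restrict S).toSignedMeasure := by
  rw [smConvOn, smConv_repr μ hν, sm_restrict_sub _ _ hS, ts_restrict _ hS, ts_restrict _ hS]

/-- `smConvOn` is additive-with-respect-to-subtraction in the second argument. -/
lemma smConvOn_sub_repr (μ : SignedMeasure α) {S : Set α} (hS : MeasurableSet S)
    {x y : SignedMeasure α} {p₁ n₁ p₂ n₂ : Measure α}
    [IsFiniteMeasure p₁] [IsFiniteMeasure n₁] [IsFiniteMeasure p₂] [IsFiniteMeasure n₂]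
    (hx : x = p₁.toSignedMeasure - n₁.toSignedMeasure)
    (hy : y = p₂.toSignedMeasure - n₂.toSignedMeasure) :
    smConvOn S μ (x - y) = smConvOn S μ x - smConvOn S μ y := by
  have hxy : x - y = (p₁ + n₂).toSignedMeasure - (n₁ + p₂).toSignedMeasure := by
    rw [hx, hy, Measure.toSignedMeasure_add, Measure.toSignedMeasure_add]; abel
  rw [smConvOn_repr μ hS hxy, smConvOn_repr μ hS hx, smConvOn_repr μ hS hy]
  have hR : ((μ.toJordanDecomposition.posPart.conv p₁ +
        μ.toJordanDecomposition.negPart.conv n₁).restrict S).toSignedMeasure -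
      ((μ.toJordanDecomposition.posPart.conv n₁ +
        μ.toJordanDecomposition.negPart.conv p₁).restrict S).toSignedMeasure -
      (((μ.toJordanDecomposition.posPart.conv p₂ +
        μ.toJordanDecomposition.negPart.conv n₂).restrict S).toSignedMeasure -
      ((μ.toJordanDecomposition.posPart.conv n₂ +
        μ.toJordanDecomposition.negPart.conv p₂).restrict S).toSignedMeasure) =
      ((μ.toJordanDecomposition.posPart.conv p₁ +
        μ.toJordanDecomposition.negPart.conv n₁).restrict S +
       (μ.toJordanDecomposition.posPart.conv n₂ +
        μ.toJordanDecomposition.negPart.conv p₂).restrict S).toSignedMeasure -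
      ((μ.toJordanDecomposition.posPart.conv n₁ +
        μ.toJordanDecomposition.negPart.conv p₁).restrict S +
       (μ.toJordanDecomposition.posPart.conv p₂ +
        μ.toJordanDecomposition.negPart.conv n₂).restrict S).toSignedMeasure := by
    rw [Measure.toSignedMeasure_add, Measure.toSignedMeasure_add]; abel
  rw [hR]
  apply ts_sub_eq
  have e1 : μ.toJordanDecomposition.posPart.conv (p₁ + n₂) +
      μ.toJordanDecomposition.negPart.conv (n₁ + p₂)
      = (μ.toJordanDecomposition.posPart.conv p₁ + μ.toJordanDecomposition.negPart.conv n₁) +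
        (μ.toJordanDecomposition.posPart.conv n₂ + μ.toJordanDecomposition.negPart.conv p₂) := by
    rw [Measure.conv_add, Measure.conv_add]; abel
  have e2 : μ.toJordanDecomposition.posPart.conv (n₁ + p₂) +
      μ.toJordanDecomposition.negPart.conv (p₁ + n₂)
      = (μ.toJordanDecomposition.posPart.conv n₁ + μ.toJordanDecomposition.negPart.conv p₁) +
        (μ.toJordanDecomposition.posPart.conv p₂ + μ.toJordanDecomposition.negPart.conv n₂) := by
    rw [Measure.conv_add, Measure.conv_add]; abel
  rw [e1, e2]
  simp only [Measure.restrict_add]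
  try abel

lemma sm_jordan_repr (x : SignedMeasure α) :
    x = x.toJordanDecomposition.posPart.toSignedMeasure -
        x.toJordanDecomposition.negPart.toSignedMeasure :=
  (x.toSignedMeasure_toJordanDecomposition).symm

lemma smConvOn_sub (μ : SignedMeasure α) {S : Set α} (hS : MeasurableSet S)
    (x y : SignedMeasure α) :
    smConvOn S μ (x - y) = smConvOn S μ x - smConvOn S μ y :=
  smConvOn_sub_repr μ hS (sm_jordan_repr x) (sm_jordan_repr y)

end Aux

/-- The iteration sequence: pairs of positive measures representing the
iterated convolutions `(μ|_S)^{*(n+1)}` as differences. -/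
noncomputable def iterSeq {α : Type*} [MeasurableSpace α] [AddCommMonoid α]
    (S : Set α) (P N : Measure α) : ℕ → Measure α × Measure α
  | 0 => (P, N)
  | n + 1 =>
      ((P.conv (iterSeq S P N n).1 + N.conv (iterSeq S P N n).2).restrict S,
       (P.conv (iterSeq S P N n).2 + N.conv (iterSeq S P N n).1).restrict S)

section IterSeq
variable {α : Type*} [MeasurableSpace α] [AddCommMonoid α]
  (S : Set α) (P N : Measure α) [IsFiniteMeasure P] [IsFiniteMeasure N]

lemma iterSeq_finite : ∀ n, IsFiniteMeasure (iterSeq S P N n).1 ∧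
    IsFiniteMeasure (iterSeq S P N n).2 := by
  intro n
  induction n with
  | zero => exact ⟨‹_›, ‹_›⟩
  | succ n ih =>
    haveI := ih.1; haveI := ih.2
    simp only [iterSeq]
    exact ⟨inferInstance, inferInstance⟩

lemma iterSeq_supp (hSm : MeasurableSet S) (hP : P Sᶜ = 0) (hN : N Sᶜ = 0) :
    ∀ n, (iterSeq S P N n).1 Sᶜ = 0 ∧ (iterSeq S P N n).2 Sᶜ = 0 := by
  intro n
  induction n with
  | zero => exact ⟨hP, hN⟩
  | succ n _ =>
    constructor <;>
    · show (Measure.restrict _ S) Sᶜ = 0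
      rw [Measure.restrict_apply hSm.compl, Set.compl_inter_self, measure_empty]

variable [MeasurableAdd₂ α]

lemma iterSeq_lint_le {g : α → ℝ≥0∞} (hg : Measurable g)
    (hmul : ∀ z w, g (z + w) = g z * g w) :
    ∀ n, (∫⁻ z, g z ∂(iterSeq S P N n).1) + (∫⁻ z, g z ∂(iterSeq S P N n).2)
      ≤ ((∫⁻ z, g z ∂P) + ∫⁻ z, g z ∂N) ^ (n + 1) := by
  intro n
  set c := (∫⁻ z, g z ∂P) + ∫⁻ z, g z ∂N with hc
  induction n with
  | zero => rw [pow_one, hc]; simp only [iterSeq]; exact le_rfl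
  | succ n ih =>
    haveI := (iterSeq_finite S P N n).1
    haveI := (iterSeq_finite S P N n).2
    simp only [iterSeq]
    set A := (iterSeq S P N n).1
    set B := (iterSeq S P N n).2
    have h1 : ∫⁻ z, g z ∂((P.conv A + N.conv B).restrict S)
        ≤ (∫⁻ z, g z ∂P) * (∫⁻ z, g z ∂A) + (∫⁻ z, g z ∂N) * ∫⁻ z, g z ∂B := by
      calc ∫⁻ z, g z ∂((P.conv A + N.conv B).restrict S)
          ≤ ∫⁻ z, g z ∂(P.conv A + N.conv B) :=
            lintegral_mono' Measure.restrict_le_self le_rfl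
        _ = _ := by rw [lintegral_add_measure, lint_conv hg hmul, lint_conv hg hmul]
    have h2 : ∫⁻ z, g z ∂((P.conv B + N.conv A).restrict S)
        ≤ (∫⁻ z, g z ∂P) * (∫⁻ z, g z ∂B) + (∫⁻ z, g z ∂N) * ∫⁻ z, g z ∂A := by
      calc ∫⁻ z, g z ∂((P.conv B + N.conv A).restrict S)
          ≤ ∫⁻ z, g z ∂(P.conv B + N.conv A) :=
            lintegral_mono' Measure.restrict_le_self le_rfl
        _ = _ := by rw [lintegral_add_measure, lint_conv hg hmul, lint_conv hg hmul]
    calc (∫⁻ z, g z ∂((P.conv A + N.conv B).restrict S)) + ∫⁻ z, g z ∂((P.conv B + N.conv A).restrict S)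
        ≤ ((∫⁻ z, g z ∂P) * (∫⁻ z, g z ∂A) + (∫⁻ z, g z ∂N) * ∫⁻ z, g z ∂B) +
          ((∫⁻ z, g z ∂P) * (∫⁻ z, g z ∂B) + (∫⁻ z, g z ∂N) * ∫⁻ z, g z ∂A) :=
          add_le_add h1 h2
      _ = c * ((∫⁻ z, g z ∂A) + ∫⁻ z, g z ∂B) := by rw [hc]; ring
      _ ≤ c * c ^ (n + 1) := mul_le_mul' le_rfl ih
      _ = c ^ (n + 2) := by rw [← pow_succ']

end IterSeq

section Espec
variable {d : ℕ}
local notation "E" => (ℝ × (Fin d → ℝ))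

lemma gmeas (l : ℝ) : Measurable (fun z : E => ENNReal.ofReal (Real.exp (-(l * z.1)))) := by
  fun_prop

lemma gmul (l : ℝ) : ∀ z w : E,
    ENNReal.ofReal (Real.exp (-(l * (z + w).1))) =
      ENNReal.ofReal (Real.exp (-(l * z.1))) * ENNReal.ofReal (Real.exp (-(l * w.1))) := by
  intro z w
  rw [← ENNReal.ofReal_mul (Real.exp_pos _).le, ← Real.exp_add]
  congr 2
  show -(l * (z.1 + w.1)) = _
  ring

lemma exists_l {T : ℝ} (m : Measure E) [IsFiniteMeasure m]
    (hm : m (Set.Icc (0:ℝ) T ×ˢ (Set.univ : Set (Fin d → ℝ)))ᶜ = 0)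
    (hz : m (({0} : Set ℝ) ×ˢ (Set.univ : Set (Fin d → ℝ))) = 0) :
    ∃ l : ℝ, 0 ≤ l ∧ ∫⁻ z : E, ENNReal.ofReal (Real.exp (-(l * z.1))) ∂m < 1 := by
  set S := Set.Icc (0:ℝ) T ×ˢ (Set.univ : Set (Fin d → ℝ)) with hSdef
  set F : ℕ → E → ℝ≥0∞ := fun n z => ENNReal.ofReal (Real.exp (-((n : ℝ) * z.1))) with hF
  have hae : ∀ᵐ z ∂m, z ∈ S ∧ z.1 ≠ 0 := by
    have h1 : ∀ᵐ z ∂m, z ∈ S := by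
      rw [MeasureTheory.ae_iff]
      exact hm
    have h2 : ∀ᵐ z ∂m, z.1 ≠ 0 := by
      rw [MeasureTheory.ae_iff]
      convert hz using 2
      ext z
      rw [Set.mem_prod]
      simp
    exact h1.and h2
  have htend : Tendsto (fun n => ∫⁻ z, F n z ∂m) atTop (𝓝 (∫⁻ _z : E, (0:ℝ≥0∞) ∂m)) := by
    apply tendsto_lintegral_of_dominated_convergence (fun _ => 1)
    · exact fun n => gmeas _
    · intro n
      filter_upwards [hae] with z hzS
      have h0 : (0:ℝ) ≤ z.1 := by
        have := hzS.1
        rw [hSdef] at this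
        exact (this.1).1
      have hle : -((n:ℝ) * z.1) ≤ 0 := by
        have : (0:ℝ) ≤ (n:ℝ) * z.1 := mul_nonneg (Nat.cast_nonneg n) h0
        linarith
      calc F n z ≤ ENNReal.ofReal (Real.exp 0) :=
            ENNReal.ofReal_le_ofReal (Real.exp_le_exp.mpr hle)
        _ = 1 := by simp
    · simp
    · filter_upwards [hae] with z hzS
      have h0 : (0:ℝ) < z.1 := by
        rcases hzS with ⟨h1, h2⟩
        rw [hSdef] at h1
        exact lt_of_le_of_ne h1.1.1 (Ne.symm h2)
      have hlim : Tendsto (fun n : ℕ => Real.exp (-((n:ℝ) * z.1))) atTop (𝓝 0) := by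
        have hpow : ∀ n : ℕ, Real.exp (-((n:ℝ) * z.1)) = Real.exp (-z.1) ^ n := by
          intro n
          rw [← Real.exp_nat_mul]
          ring_nf
        simp_rw [hpow]
        exact tendsto_pow_atTop_nhds_zero_of_lt_one (Real.exp_pos _).le
          (Real.exp_lt_one_iff.mpr (by linarith))
      have := ENNReal.tendsto_ofReal hlim
      simpa using this
  rw [lintegral_zero] at htend
  have hev : ∀ᶠ n in atTop, ∫⁻ z, F n z ∂m < 1 :=
    htend.eventually_lt_const (by norm_num)
  obtain ⟨n, hn⟩ := hev.exists
  exact ⟨(n : ℝ), Nat.cast_nonneg n, hn⟩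

end Espec


/-- if `μ ∈ M([0,T]×ℝ^d)` puts no mass on `{0}×ℝ^d`, there exists a unique
`ρ ∈ M([0,T]×ℝ^d)` (the resolvent of `μ`) with `ρ + μ = μ*ρ`. -/
theorem stmt1 (d : ℕ) (hd : 1 ≤ d) (T : ℝ) (hT : 0 < T)
    (S : Set (ℝ × (Fin d → ℝ))) (hS : S = Set.Icc (0 : ℝ) T ×ˢ (Set.univ : Set (Fin d → ℝ)))
    (μ : SignedMeasure (ℝ × (Fin d → ℝ)))
    (hsupp : μ.totalVariation Sᶜ = 0)
    (hzero : μ.totalVariation (({0} : Set ℝ) ×ˢ (Set.univ : Set (Fin d → ℝ))) = 0) :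
    ∃! ρ : SignedMeasure (ℝ × (Fin d → ℝ)),
      ρ.totalVariation Sᶜ = 0 ∧ ρ + μ = smConvOn S μ ρ := by
  classical
  have hSm : MeasurableSet S := by rw [hS]; exact measurableSet_Icc.prod MeasurableSet.univ
  set P := μ.toJordanDecomposition.posPart with hPdef
  set N := μ.toJordanDecomposition.negPart with hNdef
  have hTV : μ.totalVariation = P + N := rfl
  rw [hTV] at hsupp hzero
  have hPS : P Sᶜ = 0 := by
    rw [Measure.add_apply] at hsupp
    exact (add_eq_zero.mp hsupp).1
  have hNS : N Sᶜ = 0 := by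
    rw [Measure.add_apply] at hsupp
    exact (add_eq_zero.mp hsupp).2
  -- choice of the exponential weight
  obtain ⟨l, hl0, hcl⟩ := exists_l (T := T) (P + N) (by rw [← hS]; exact hsupp) hzero
  set g : (ℝ × (Fin d → ℝ)) → ℝ≥0∞ := fun z => ENNReal.ofReal (Real.exp (-(l * z.1))) with hgdef
  have hg : Measurable g := gmeas l
  have hmul : ∀ z w : (ℝ × (Fin d → ℝ)), g (z + w) = g z * g w := gmul l
  set c := (∫⁻ z, g z ∂P) + ∫⁻ z, g z ∂N with hcdef
  have hc1 : c < 1 := by rw [hcdef, ← lintegral_add_measure]; exact hcl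
  have hcne : c ≠ ∞ := ne_top_of_lt (lt_of_lt_of_le hc1 le_top)
  set C := ENNReal.ofReal (Real.exp (-(l * T))) with hCdef
  have hC0 : C ≠ 0 := (ENNReal.ofReal_pos.mpr (Real.exp_pos _)).ne'
  have hb1 : ∀ z ∈ S, g z ≤ 1 := by
    intro z hz
    rw [hS] at hz
    have h0 : (0:ℝ) ≤ z.1 := hz.1.1
    have hle : -(l * z.1) ≤ 0 := by nlinarith
    calc g z ≤ ENNReal.ofReal (Real.exp 0) :=
          ENNReal.ofReal_le_ofReal (Real.exp_le_exp.mpr hle)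
      _ = 1 := by simp
  have hbC : ∀ z ∈ S, C ≤ g z := by
    intro z hz
    rw [hS] at hz
    have h0 : z.1 ≤ T := hz.1.2
    exact ENNReal.ofReal_le_ofReal (Real.exp_le_exp.mpr (by nlinarith))
  have hgne : ∀ z, g z ≠ 0 := fun z => (ENNReal.ofReal_pos.mpr (Real.exp_pos _)).ne'
  -- the iteration sequence
  set u : ℕ → Measure (ℝ × (Fin d → ℝ)) := fun n => (iterSeq S P N n).1 with hudef
  set v : ℕ → Measure (ℝ × (Fin d → ℝ)) := fun n => (iterSeq S P N n).2 with hvdef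
  haveI hfu : ∀ n, IsFiniteMeasure (u n) := fun n => (iterSeq_finite S P N n).1
  haveI hfv : ∀ n, IsFiniteMeasure (v n) := fun n => (iterSeq_finite S P N n).2
  have hsuppu : ∀ n, u n Sᶜ = 0 := fun n => (iterSeq_supp S P N hSm hPS hNS n).1
  have hsuppv : ∀ n, v n Sᶜ = 0 := fun n => (iterSeq_supp S P N hSm hPS hNS n).2
  have hJ : ∀ n, (∫⁻ z, g z ∂(u n)) + (∫⁻ z, g z ∂(v n)) ≤ c ^ (n + 1) :=
    iterSeq_lint_le S P N hg hmul
  -- summability of the total masses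
  have hgeom : (∑' n : ℕ, c ^ (n + 1)) ≠ ∞ := by
    have h1 : (∑' n : ℕ, c ^ (n + 1)) = c * ∑' n : ℕ, c ^ n := by
      rw [← ENNReal.tsum_mul_left]
      congr 1 with n
      rw [pow_succ']
    rw [h1, ENNReal.tsum_geometric]
    exact ENNReal.mul_ne_top hcne (ENNReal.inv_ne_top.mpr (tsub_pos_of_lt hc1).ne')
  have hmass : ∀ (w : ℕ → Measure (ℝ × (Fin d → ℝ))), (∀ n, IsFiniteMeasure (w n)) →
      (∀ n, w n Sᶜ = 0) → (∀ n, (∫⁻ z, g z ∂(w n)) ≤ c ^ (n + 1)) →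
      (Measure.sum w) Set.univ < ∞ := by
    intro w hwf hws hwJ
    rw [Measure.sum_apply _ MeasurableSet.univ]
    have hle : C * ∑' n, w n Set.univ ≤ ∑' n : ℕ, c ^ (n + 1) := by
      rw [← ENNReal.tsum_mul_left]
      refine ENNReal.tsum_le_tsum fun n => ?_
      haveI := hwf n
      exact (lint_support_ge hSm hg hbC (hws n)).trans (hwJ n)
    have hne : (∑' n, w n Set.univ) ≠ ∞ := by
      intro htop
      rw [htop, ENNReal.mul_top hC0] at hle
      exact hgeom (top_le_iff.mp hle)
    exact hne.lt_top
  have hAfin : (Measure.sum u) Set.univ < ∞ :=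
    hmass u hfu hsuppu fun n => le_trans le_self_add (hJ n)
  have hBfin : (Measure.sum v) Set.univ < ∞ :=
    hmass v hfv hsuppv fun n => le_trans le_add_self (hJ n)
  set A := Measure.sum u with hAdef
  set B := Measure.sum v with hBdef
  haveI : IsFiniteMeasure A := ⟨hAfin⟩
  haveI : IsFiniteMeasure B := ⟨hBfin⟩
  have hAsucc : (Measure.sum (fun n => u (n + 1))) Set.univ < ∞ :=
    hmass _ (fun n => hfu (n + 1)) (fun n => hsuppu (n + 1))
      (fun n => le_trans (le_trans le_self_add (hJ (n + 1)))
        (pow_le_pow_right_of_le_one' hc1.le (by omega)))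
  have hBsucc : (Measure.sum (fun n => v (n + 1))) Set.univ < ∞ :=
    hmass _ (fun n => hfv (n + 1)) (fun n => hsuppv (n + 1))
      (fun n => le_trans (le_trans le_add_self (hJ (n + 1)))
        (pow_le_pow_right_of_le_one' hc1.le (by omega)))
  haveI : IsFiniteMeasure (Measure.sum (fun n => u (n + 1))) := ⟨hAsucc⟩
  haveI : IsFiniteMeasure (Measure.sum (fun n => v (n + 1))) := ⟨hBsucc⟩
  have hASc : A Sᶜ = 0 := by
    rw [hAdef, Measure.sum_apply _ hSm.compl]
    exact ENNReal.tsum_eq_zero.mpr hsuppu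
  have hBSc : B Sᶜ = 0 := by
    rw [hBdef, Measure.sum_apply _ hSm.compl]
    exact ENNReal.tsum_eq_zero.mpr hsuppv
  set ρ : SignedMeasure (ℝ × (Fin d → ℝ)) := B.toSignedMeasure - A.toSignedMeasure with hρdef
  have hρrepr : ρ = B.toSignedMeasure - A.toSignedMeasure := hρdef
  -- support property of ρ
  have hTVρ : ρ.totalVariation Sᶜ = 0 := by
    obtain ⟨hp, hn⟩ := jordan_le hρrepr
    have h1 : ρ.toJordanDecomposition.posPart Sᶜ = 0 :=
      le_antisymm (le_trans (Measure.le_iff.mp hp _ hSm.compl) hBSc.le) zero_le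
    have h2 : ρ.toJordanDecomposition.negPart Sᶜ = 0 :=
      le_antisymm (le_trans (Measure.le_iff.mp hn _ hSm.compl) hASc.le) zero_le
    show (ρ.toJordanDecomposition.posPart + ρ.toJordanDecomposition.negPart) Sᶜ = 0
    rw [Measure.add_apply, h1, h2, add_zero]
  -- the fixed point equation
  have hμrepr : μ = P.toSignedMeasure - N.toSignedMeasure := sm_jordan_repr μ
  have hconv : smConvOn S μ ρ =
      (Measure.sum (fun n => v (n + 1))).toSignedMeasure -
      (Measure.sum (fun n => u (n + 1))).toSignedMeasure := by
    rw [smConvOn_repr μ hSm hρrepr]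
    have e1 : (P.conv B + N.conv A).restrict S = Measure.sum (fun n => v (n + 1)) := by
      rw [hAdef, hBdef, conv_sum_right, conv_sum_right, sum_add_sum',
        Measure.restrict_sum _ hSm]
      refine congrArg Measure.sum (funext fun n => ?_)
      simp only [hudef, hvdef, iterSeq]
    have e2 : (P.conv A + N.conv B).restrict S = Measure.sum (fun n => u (n + 1)) := by
      rw [hAdef, hBdef, conv_sum_right, conv_sum_right, sum_add_sum',
        Measure.restrict_sum _ hSm]
      refine congrArg Measure.sum (funext fun n => ?_)
      simp only [hudef, hvdef, iterSeq]
    apply ts_sub_eq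
    rw [e1, e2]
  have heqρ : ρ + μ = smConvOn S μ ρ := by
    have hL : ρ + μ = (B + P).toSignedMeasure - (A + N).toSignedMeasure := by
      rw [hρdef, Measure.toSignedMeasure_add, Measure.toSignedMeasure_add]
      linear_combination (norm := abel) hμrepr
    rw [hL, hconv]
    apply ts_sub_eq
    have hAsplit : A = P + Measure.sum (fun n => u (n + 1)) := by
      rw [hAdef, sum_succ' u]; rfl
    have hBsplit : B = N + Measure.sum (fun n => v (n + 1)) := by
      rw [hBdef, sum_succ' v]; rfl
    rw [hBsplit, hAsplit]
    abel
  refine ⟨ρ, ⟨hTVρ, heqρ⟩, ?_⟩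
  -- uniqueness
  intro ρ' hρ'
  obtain ⟨hsupp', heq'⟩ := hρ'
  set δ := ρ' - ρ with hδdef
  have hδeq : δ = smConvOn S μ δ := by
    rw [hδdef, smConvOn_sub μ hSm ρ' ρ]
    linear_combination (norm := abel) heq' - heqρ
  set a := δ.toJordanDecomposition.posPart with hadef
  set b := δ.toJordanDecomposition.negPart with hbdef
  have hδr : δ = a.toSignedMeasure - b.toSignedMeasure := sm_jordan_repr δ
  have hδr2 : δ = ((P.conv a + N.conv b).restrict S).toSignedMeasure -
      ((P.conv b + N.conv a).restrict S).toSignedMeasure := by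
    calc δ = smConvOn S μ δ := hδeq
      _ = _ := smConvOn_repr μ hSm hδr
  obtain ⟨ha, hb⟩ := jordan_le hδr2
  have hXsupp : ((P.conv a + N.conv b).restrict S) Sᶜ = 0 := by
    rw [Measure.restrict_apply hSm.compl, Set.compl_inter_self, measure_empty]
  have hYsupp : ((P.conv b + N.conv a).restrict S) Sᶜ = 0 := by
    rw [Measure.restrict_apply hSm.compl, Set.compl_inter_self, measure_empty]
  have hJa : (∫⁻ z, g z ∂a) ≤ ∫⁻ z, g z ∂((P.conv a + N.conv b).restrict S) :=
    lintegral_mono' ha le_rfl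
  have hJb : (∫⁻ z, g z ∂b) ≤ ∫⁻ z, g z ∂((P.conv b + N.conv a).restrict S) :=
    lintegral_mono' hb le_rfl
  set t := (∫⁻ z, g z ∂a) + ∫⁻ z, g z ∂b with htdef
  have htne : t ≠ ∞ := by
    have h1 : (∫⁻ z, g z ∂a) ≠ ∞ :=
      ne_top_of_le_ne_top (measure_ne_top _ _) (hJa.trans (lint_support_le hSm hb1 hXsupp))
    have h2 : (∫⁻ z, g z ∂b) ≠ ∞ :=
      ne_top_of_le_ne_top (measure_ne_top _ _) (hJb.trans (lint_support_le hSm hb1 hYsupp))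
    rw [htdef]
    exact ENNReal.add_ne_top.mpr ⟨h1, h2⟩
  have hcontr : t ≤ c * t := by
    have h1 : (∫⁻ z, g z ∂a) ≤
        (∫⁻ z, g z ∂P) * (∫⁻ z, g z ∂a) + (∫⁻ z, g z ∂N) * ∫⁻ z, g z ∂b := by
      refine hJa.trans ?_
      calc ∫⁻ z, g z ∂((P.conv a + N.conv b).restrict S)
          ≤ ∫⁻ z, g z ∂(P.conv a + N.conv b) := lintegral_mono' Measure.restrict_le_self le_rfl
        _ = _ := by rw [lintegral_add_measure, lint_conv hg hmul, lint_conv hg hmul]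
    have h2 : (∫⁻ z, g z ∂b) ≤
        (∫⁻ z, g z ∂P) * (∫⁻ z, g z ∂b) + (∫⁻ z, g z ∂N) * ∫⁻ z, g z ∂a := by
      refine hJb.trans ?_
      calc ∫⁻ z, g z ∂((P.conv b + N.conv a).restrict S)
          ≤ ∫⁻ z, g z ∂(P.conv b + N.conv a) := lintegral_mono' Measure.restrict_le_self le_rfl
        _ = _ := by rw [lintegral_add_measure, lint_conv hg hmul, lint_conv hg hmul]
    calc t ≤ ((∫⁻ z, g z ∂P) * (∫⁻ z, g z ∂a) + (∫⁻ z, g z ∂N) * ∫⁻ z, g z ∂b) +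
        ((∫⁻ z, g z ∂P) * (∫⁻ z, g z ∂b) + (∫⁻ z, g z ∂N) * ∫⁻ z, g z ∂a) :=
          add_le_add h1 h2
      _ = c * t := by rw [hcdef, htdef]; ring
  have ht0 : t = 0 := by
    by_contra ht0
    have : c * t < 1 * t := by
      rw [mul_comm c, mul_comm 1]; exact ENNReal.mul_lt_mul_right ht0 htne hc1
    rw [one_mul] at this
    exact absurd (hcontr.trans_lt this) (lt_irrefl _)
  have ha0 : a = 0 := by
    have hJa0 : (∫⁻ z, g z ∂a) = 0 := le_antisymm (le_trans le_self_add ht0.le) zero_le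
    rw [lintegral_eq_zero_iff hg] at hJa0
    have : a {z | ¬ g z = 0} = 0 := hJa0
    rw [Set.eq_univ_of_forall (fun z => hgne z : ∀ z, z ∈ {z | ¬ g z = 0})] at this
    exact Measure.measure_univ_eq_zero.mp this
  have hb0 : b = 0 := by
    have hJb0 : (∫⁻ z, g z ∂b) = 0 := le_antisymm (le_trans le_add_self ht0.le) zero_le
    rw [lintegral_eq_zero_iff hg] at hJb0
    have : b {z | ¬ g z = 0} = 0 := hJb0
    rw [Set.eq_univ_of_forall (fun z => hgne z : ∀ z, z ∈ {z | ¬ g z = 0})] at this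
    exact Measure.measure_univ_eq_zero.mp this
  have hδ0 : δ = 0 := by
    have h1 : a.toSignedMeasure = 0 := by
      ext i hi
      rw [Measure.toSignedMeasure_apply_measurable hi, ha0]
      simp
    have h2 : b.toSignedMeasure = 0 := by
      ext i hi
      rw [Measure.toSignedMeasure_apply_measurable hi, hb0]
      simp
    rw [hδr, h1, h2, sub_zero]
  have := sub_eq_zero.mp (hδdef ▸ hδ0)
  exact this
end

section
/- Let d ≥ 1, let ν be a Borel measure on ℝ with ν({0})=0 and ∫_ℝ (1 ∧ z²) ν(dz) < ∞, let b ∈ ℝ, and let g: ℝ₊×ℝ^d → ℝ be measurable. Suppose there exist measurable functions k, K: ℝ₊ → ℝ₊ and constants C₁, C₂ ≥ 0 such that |b + ∫_{{1<|z|≤A}} z ν(dz)| ≤ C₁ K(A) for all A ≥ 1, |b − ∫_{{a<|z|≤1}} z ν(dz)| ≤ C₂ k(a) for all a ∈ (0,1], and ∫_{ℝ₊×ℝ^d} |g(t,x)| ( k(|g(t,x)|^{-1}) 1_{{|g(t,x)|>1}} + K(|g(t,x)|^{-1}) 1_{{0<|g(t,x)|≤1}} ) d(t,x) < ∞. Then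 ∫_{ℝ₊×ℝ^d} | b g(t,x) + ∫_ℝ ( z g(t,x) 1_{{|z g(t,x)|≤1}} − g(t,x) z 1_{{|z|≤1}} ) ν(dz) | d(t,x) < ∞. -/
open MeasureTheory

/-- a sufficient criterion for condition (1) of the Rajput–Rosinski
integrability criterion: if `|b + ∫_{1<|z|≤A} z ν(dz)| = O(K(A))`, `|b - ∫_{a<|z|≤1} z ν(dz)|
= O(k(a))` and `∫ |g| (k(|g|⁻¹) 1_{|g|>1} + K(|g|⁻¹) 1_{0<|g|≤1}) < ∞`, then
`∫ |b g + ∫ (z g 1_{|zg|≤1} - g z 1_{|z|≤1}) ν(dz)| d(t,x) < ∞`. -/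
theorem stmt9 (d : ℕ) (hd : 1 ≤ d)
    (S : Set (ℝ × (Fin d → ℝ))) (hS : S = Set.Ici (0 : ℝ) ×ˢ (Set.univ : Set (Fin d → ℝ)))
    (ν : Measure ℝ) (b : ℝ)
    (hν0 : ν ({0} : Set ℝ) = 0)
    (hν2 : (∫⁻ z, ENNReal.ofReal (min 1 (z ^ 2)) ∂ν) < ⊤)
    (g : ℝ × (Fin d → ℝ) → ℝ) (hgmeas : Measurable g)
    (k K : ℝ → ℝ) (hkmeas : Measurable k) (hKmeas : Measurable K)
    (hknn : ∀ x, 0 ≤ k x) (hKnn : ∀ x, 0 ≤ K x)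
    (C₁ C₂ : ℝ) (hC₁ : 0 ≤ C₁) (hC₂ : 0 ≤ C₂)
    (hbK : ∀ A : ℝ, 1 ≤ A →
      |b + ∫ z in {z : ℝ | 1 < |z| ∧ |z| ≤ A}, z ∂ν| ≤ C₁ * K A)
    (hbk : ∀ a : ℝ, a ∈ Set.Ioc (0 : ℝ) 1 →
      |b - ∫ z in {z : ℝ | a < |z| ∧ |z| ≤ 1}, z ∂ν| ≤ C₂ * k a)
    (hgint : (∫⁻ x in S, ENNReal.ofReal (|g x| *
        ((if 1 < |g x| then k (|g x|⁻¹) else 0) +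
          (if 0 < |g x| ∧ |g x| ≤ 1 then K (|g x|⁻¹) else 0))) ∂volume) < ⊤) :
    (∫⁻ x in S, ENNReal.ofReal
        |b * g x + ∫ z, ((if |z * g x| ≤ 1 then z * g x else 0) -
          (if |z| ≤ 1 then g x * z else 0)) ∂ν| ∂volume) < ⊤ := by

  have hCnn : (0:ℝ) ≤ C₁ + C₂ := by linarith
  have key : ∀ x : ℝ × (Fin d → ℝ),
      |b * g x + ∫ z, ((if |z * g x| ≤ 1 then z * g x else 0) -
          (if |z| ≤ 1 then g x * z else 0)) ∂ν| ≤
      (C₁ + C₂) * (|g x| * ((if 1 < |g x| then k (|g x|⁻¹) else 0) +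
          (if 0 < |g x| ∧ |g x| ≤ 1 then K (|g x|⁻¹) else 0))) := by
    intro x
    set u := g x with hu
    rcases eq_or_ne u 0 with h0 | h0
    · simp [h0]
    have hupos : 0 < |u| := abs_pos.mpr h0
    have hcond : ∀ z : ℝ, |z * u| ≤ 1 ↔ |z| ≤ |u|⁻¹ := by
      intro z
      rw [abs_mul, ← le_div_iff₀ hupos, one_div]
    rcases le_or_gt (|u|) 1 with hle | hgt
    · -- 0 < |u| ≤ 1
      have hA : 1 ≤ |u|⁻¹ := (one_le_inv₀ hupos).mpr hle
      have hset : MeasurableSet {z : ℝ | 1 < |z| ∧ |z| ≤ |u|⁻¹} := by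
        apply MeasurableSet.inter
        · exact measurableSet_lt measurable_const measurable_abs
        · exact measurableSet_le measurable_abs measurable_const
      have hfun : ∀ z : ℝ, ((if |z * u| ≤ 1 then z * u else 0) -
          (if |z| ≤ 1 then u * z else 0)) =
          Set.indicator {z : ℝ | 1 < |z| ∧ |z| ≤ |u|⁻¹} (fun z => z * u) z := by
        intro z
        simp only [hcond z, Set.indicator_apply, Set.mem_setOf_eq]
        rcases le_or_gt (|z|) 1 with h1 | h1
        · have h2 : |z| ≤ |u|⁻¹ := h1.trans hA
          rw [if_pos h2, if_pos h1,
            if_neg (by rintro ⟨h, -⟩; exact absurd h (not_lt.2 h1))]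
          ring
        · rcases le_or_gt (|z|) (|u|⁻¹) with h2 | h2
          · rw [if_pos h2, if_neg (not_le.2 h1), if_pos ⟨h1, h2⟩]
            ring
          · rw [if_neg (not_le.2 h2), if_neg (not_le.2 h1),
              if_neg (by rintro ⟨-, h⟩; exact absurd h (not_le.2 h2))]
            ring
      have hint : (∫ z, ((if |z * u| ≤ 1 then z * u else 0) -
            (if |z| ≤ 1 then u * z else 0)) ∂ν) =
          (∫ z in {z : ℝ | 1 < |z| ∧ |z| ≤ |u|⁻¹}, z ∂ν) * u := by
        rw [integral_congr_ae (Filter.Eventually.of_forall hfun),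
          integral_indicator hset, integral_mul_const]
      rw [hint]
      have h1 : ¬ (1 < |u|) := not_lt.mpr hle
      have h2 : 0 < |u| ∧ |u| ≤ 1 := ⟨hupos, hle⟩
      simp only [if_neg h1, if_pos h2, zero_add]
      have hb := hbK (|u|⁻¹) hA
      have : b * u + (∫ z in {z : ℝ | 1 < |z| ∧ |z| ≤ |u|⁻¹}, z ∂ν) * u =
          (b + ∫ z in {z : ℝ | 1 < |z| ∧ |z| ≤ |u|⁻¹}, z ∂ν) * u := by ring
      rw [this, abs_mul]
      have hKn := hKnn (|u|⁻¹)
      nlinarith [mul_le_mul_of_nonneg_right hb (abs_nonneg u), mul_nonneg (mul_nonneg hC₂ (abs_nonneg u)) hKn]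
    · -- 1 < |u|
      have ha : |u|⁻¹ ∈ Set.Ioc (0:ℝ) 1 := ⟨inv_pos.mpr hupos, inv_le_one_of_one_le₀ hgt.le⟩
      have hset : MeasurableSet {z : ℝ | |u|⁻¹ < |z| ∧ |z| ≤ 1} := by
        apply MeasurableSet.inter
        · exact measurableSet_lt measurable_const measurable_abs
        · exact measurableSet_le measurable_abs measurable_const
      have hlt1 : |u|⁻¹ < 1 := inv_lt_one_of_one_lt₀ hgt
      have hfun : ∀ z : ℝ, ((if |z * u| ≤ 1 then z * u else 0) -
          (if |z| ≤ 1 then u * z else 0)) =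
          Set.indicator {z : ℝ | |u|⁻¹ < |z| ∧ |z| ≤ 1} (fun z => -(z * u)) z := by
        intro z
        simp only [hcond z, Set.indicator_apply, Set.mem_setOf_eq]
        rcases le_or_gt (|z|) (|u|⁻¹) with h2 | h2
        · have h1 : |z| ≤ 1 := h2.trans hlt1.le
          rw [if_pos h2, if_pos h1,
            if_neg (by rintro ⟨h, -⟩; exact absurd h (not_lt.2 h2))]
          ring
        · rcases le_or_gt (|z|) 1 with h1 | h1
          · rw [if_neg (not_le.2 h2), if_pos h1, if_pos ⟨h2, h1⟩]
            ring
          · rw [if_neg (not_le.2 h2), if_neg (not_le.2 h1),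
              if_neg (by rintro ⟨-, h⟩; exact absurd h (not_le.2 h1))]
            ring
      have hint : (∫ z, ((if |z * u| ≤ 1 then z * u else 0) -
            (if |z| ≤ 1 then u * z else 0)) ∂ν) =
          -((∫ z in {z : ℝ | |u|⁻¹ < |z| ∧ |z| ≤ 1}, z ∂ν) * u) := by
        rw [integral_congr_ae (Filter.Eventually.of_forall hfun),
          integral_indicator hset, integral_neg, integral_mul_const]
      rw [hint]
      have h1 : (1 < |u|) := hgt
      have h2 : ¬ (0 < |u| ∧ |u| ≤ 1) := by
        rintro ⟨-, h⟩; linarith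
      simp only [if_pos h1, if_neg h2, add_zero]
      have hb := hbk (|u|⁻¹) ha
      have : b * u + -((∫ z in {z : ℝ | |u|⁻¹ < |z| ∧ |z| ≤ 1}, z ∂ν) * u) =
          (b - ∫ z in {z : ℝ | |u|⁻¹ < |z| ∧ |z| ≤ 1}, z ∂ν) * u := by ring
      rw [this, abs_mul]
      have hkn := hknn (|u|⁻¹)
      nlinarith [mul_le_mul_of_nonneg_right hb (abs_nonneg u), mul_nonneg (mul_nonneg hC₁ (abs_nonneg u)) hkn]
  calc (∫⁻ x in S, ENNReal.ofReal
        |b * g x + ∫ z, ((if |z * g x| ≤ 1 then z * g x else 0) -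
          (if |z| ≤ 1 then g x * z else 0)) ∂ν| ∂volume)
      ≤ ∫⁻ x in S, ENNReal.ofReal ((C₁ + C₂) * (|g x| *
          ((if 1 < |g x| then k (|g x|⁻¹) else 0) +
            (if 0 < |g x| ∧ |g x| ≤ 1 then K (|g x|⁻¹) else 0)))) ∂volume :=
        lintegral_mono fun x => ENNReal.ofReal_le_ofReal (key x)
    _ = ∫⁻ x in S, ENNReal.ofReal (C₁ + C₂) * ENNReal.ofReal (|g x| *
          ((if 1 < |g x| then k (|g x|⁻¹) else 0) +
            (if 0 < |g x| ∧ |g x| ≤ 1 then K (|g x|⁻¹) else 0))) ∂volume := by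
        simp_rw [ENNReal.ofReal_mul hCnn]
    _ = ENNReal.ofReal (C₁ + C₂) * ∫⁻ x in S, ENNReal.ofReal (|g x| *
          ((if 1 < |g x| then k (|g x|⁻¹) else 0) +
            (if 0 < |g x| ∧ |g x| ≤ 1 then K (|g x|⁻¹) else 0))) ∂volume :=
        lintegral_const_mul' _ _ ENNReal.ofReal_ne_top
    _ < ⊤ := ENNReal.mul_lt_top ENNReal.ofReal_lt_top hgint
end

section
/- Let d ≥ 1, let ν be a Borel measure on ℝ with ν({0})=0 and ∫_ℝ (1 ∧ z²) ν(dz) < ∞, and let g: ℝ₊×ℝ^d → ℝ be measurable. Suppose there are an increasing function h: ℝ₊ → ℝ₊ with h(x) > 0 for x > 0 and a constant C ≥ 0 such that u² h(x) ≤ C h(u x) for all u ∈ [0,1] and x ∈ ℝ₊, and that ∫_{ℝ₊×ℝ^d} h(|g(t,x)|) d(t,x) < ∞ and ∫_ℝ h(|z|^{-1})^{-1} ν(dz) < ∞. Then ∫_{ℝ₊×ℝ^d} ∫_ℝ ( 1 ∧ |z g(t,x)|² ) ν(dz) d(t,x) < ∞. -/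
open MeasureTheory

/-- a sufficient criterion for condition (3) of the Rajput–Rosinski
integrability criterion: if `h` is increasing with `u² h(x) ≤ C h(ux)` for `u ∈ [0,1]`,
`∫ h(|g|) d(t,x) < ∞` and `∫ h(|z|⁻¹)⁻¹ ν(dz) < ∞`, then
`∫∫ (1 ∧ |z g(t,x)|²) ν(dz) d(t,x) < ∞`. -/
theorem stmt10 (d : ℕ) (hd : 1 ≤ d)
    (S : Set (ℝ × (Fin d → ℝ))) (hS : S = Set.Ici (0 : ℝ) ×ˢ (Set.univ : Set (Fin d → ℝ)))
    (ν : Measure ℝ)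
    (hν0 : ν ({0} : Set ℝ) = 0)
    (hν2 : (∫⁻ z, ENNReal.ofReal (min 1 (z ^ 2)) ∂ν) < ⊤)
    (g : ℝ × (Fin d → ℝ) → ℝ) (hgmeas : Measurable g)
    (h : ℝ → ℝ) (hhmeas : Measurable h) (hmono : MonotoneOn h (Set.Ici (0 : ℝ)))
    (hnn : ∀ x : ℝ, 0 ≤ x → 0 ≤ h x) (hpos : ∀ x : ℝ, 0 < x → 0 < h x)
    (C : ℝ) (hC : 0 ≤ C)
    (hsub : ∀ u x : ℝ, u ∈ Set.Icc (0 : ℝ) 1 → 0 ≤ x → u ^ 2 * h x ≤ C * h (u * x))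
    (hg : (∫⁻ x in S, ENNReal.ofReal (h |g x|) ∂volume) < ⊤)
    (hν : (∫⁻ z, ENNReal.ofReal (h |z|⁻¹)⁻¹ ∂ν) < ⊤) :
    (∫⁻ x in S, ∫⁻ z, ENNReal.ofReal (min 1 ((z * g x) ^ 2)) ∂ν ∂volume) < ⊤ := by
  -- key real pointwise inequality
  have key : ∀ z : ℝ, z ≠ 0 → ∀ y : ℝ,
      min 1 ((z * y) ^ 2) ≤ max C 1 * h |y| * (h |z|⁻¹)⁻¹ := by
    intro z hz y
    have hzabs : (0:ℝ) < |z| := abs_pos.mpr hz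
    have hzpos : (0:ℝ) < |z|⁻¹ := inv_pos.mpr hzabs
    have ha : 0 < h |z|⁻¹ := hpos _ hzpos
    rw [mul_comm (max C 1 * h |y|) _, ← div_eq_inv_mul, le_div_iff₀ ha]
    by_cases hle : |z * y| ≤ 1
    · have h1 : (z * y) ^ 2 ≤ 1 := by nlinarith [sq_abs (z * y), abs_nonneg (z * y)]
      rw [min_eq_right h1]
      have h2 := hsub |z * y| |z|⁻¹ ⟨abs_nonneg _, hle⟩ hzpos.le
      have h3 : |z * y| * |z|⁻¹ = |y| := by
        rw [abs_mul, mul_comm |z| |y|, mul_assoc, mul_inv_cancel₀ hzabs.ne', mul_one]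
      rw [h3, sq_abs] at h2
      have : C * h |y| ≤ max C 1 * h |y| :=
        mul_le_mul_of_nonneg_right (le_max_left _ _) (hnn _ (abs_nonneg _))
      linarith
    · push_neg at hle
      have h1 : (1:ℝ) ≤ (z * y) ^ 2 := by nlinarith [sq_abs (z * y), abs_nonneg (z * y)]
      rw [min_eq_left h1, one_mul]
      have hzy : |z|⁻¹ ≤ |y| := by
        rw [abs_mul] at hle
        rw [inv_le_iff_one_le_mul₀ hzabs]
        linarith
      have : h |z|⁻¹ ≤ h |y| :=
        hmono (Set.mem_Ici.mpr hzpos.le) (Set.mem_Ici.mpr (abs_nonneg y)) hzy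
      have h4 : h |y| ≤ max C 1 * h |y| := by
        nlinarith [hnn |y| (abs_nonneg y), le_max_right C 1]
      linarith
  have haez : ∀ᵐ z ∂ν, z ≠ 0 := by
    rw [ae_iff]
    convert hν0 using 2
    ext z; simp
  set M : ENNReal := ENNReal.ofReal (max C 1) with hM
  set I : ENNReal := ∫⁻ z, ENNReal.ofReal (h |z|⁻¹)⁻¹ ∂ν with hI
  have inner : ∀ x : ℝ × (Fin d → ℝ),
      (∫⁻ z, ENNReal.ofReal (min 1 ((z * g x) ^ 2)) ∂ν)
        ≤ (M * I) * ENNReal.ofReal (h |g x|) := by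
    intro x
    have hb : (∫⁻ z, ENNReal.ofReal (min 1 ((z * g x) ^ 2)) ∂ν)
        ≤ ∫⁻ z, (M * ENNReal.ofReal (h |g x|)) * ENNReal.ofReal (h |z|⁻¹)⁻¹ ∂ν := by
      refine lintegral_mono_ae ?_
      filter_upwards [haez] with z hz
      calc ENNReal.ofReal (min 1 ((z * g x) ^ 2))
          ≤ ENNReal.ofReal (max C 1 * h |g x| * (h |z|⁻¹)⁻¹) :=
            ENNReal.ofReal_le_ofReal (key z hz (g x))
        _ = (M * ENNReal.ofReal (h |g x|)) * ENNReal.ofReal (h |z|⁻¹)⁻¹ := by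
            rw [ENNReal.ofReal_mul (mul_nonneg (le_trans zero_le_one (le_max_right C 1)) (hnn _ (abs_nonneg _))),
              ENNReal.ofReal_mul (by positivity : (0:ℝ) ≤ max C 1)]
    calc (∫⁻ z, ENNReal.ofReal (min 1 ((z * g x) ^ 2)) ∂ν)
        ≤ ∫⁻ z, (M * ENNReal.ofReal (h |g x|)) * ENNReal.ofReal (h |z|⁻¹)⁻¹ ∂ν := hb
      _ = (M * ENNReal.ofReal (h |g x|)) * I := by
          rw [lintegral_const_mul' _ _ (by finiteness)]
      _ = (M * I) * ENNReal.ofReal (h |g x|) := by ring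
  calc (∫⁻ x in S, ∫⁻ z, ENNReal.ofReal (min 1 ((z * g x) ^ 2)) ∂ν ∂volume)
      ≤ ∫⁻ x in S, (M * I) * ENNReal.ofReal (h |g x|) ∂volume :=
        lintegral_mono fun x => inner x
    _ = (M * I) * ∫⁻ x in S, ENNReal.ofReal (h |g x|) ∂volume := by
        rw [lintegral_const_mul' _ _ (ENNReal.mul_ne_top ENNReal.ofReal_ne_top hν.ne)]
    _ < ⊤ := ENNReal.mul_lt_top (ENNReal.mul_lt_top ENNReal.ofReal_lt_top hν) hg
end

section
/- Let d ≥ 1, T > 0, let ρ be a signed Borel measure of finite total variation on ℝ₊×ℝ^d, and let g: ℝ₊×ℝ^d → ℝ be measurable (extended by zero to negative times). Assume: (i) there are u > 0 and constants C_T such that ∫₀^T∫_{ℝ^d} |g(s,y) − g(s+τ, y+ξ)|² d(s,y) ≤ C_T |(τ,ξ)|^u whenever |(τ,ξ)| is sufficiently small; (ii) there is p > 1 with ∫₀^T ( ∫_{ℝ^d} g(s,y)² dy )^p ds < ∞. Define (ρ*g)(t,x) := ∫₀^t∫_{ℝ^d} g(t−s,x−y) ρ(ds,dy). Then: (a) there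 is a constant C'_T such that for all sufficiently small |(τ,ξ)|, ∫₀^T∫_{ℝ^d} |(ρ*g)(s,y) − (ρ*g)(s+τ, y+ξ)|² d(s,y) ≤ C'_T ( |(τ,ξ)|^u + |(τ,ξ)|^{(p−1)/p} ); and (b) ∫₀^T ( ∫_{ℝ^d} (ρ*g)(s,y)² dy )^p ds < ∞. -/
open MeasureTheory

open Set
open scoped ENNReal NNReal

/-- Hölder/Jensen inequality for `lintegral`. -/
lemma jensenHelper {α : Type*} [MeasurableSpace α] (μ : Measure α) {f : α → ℝ≥0∞}
    (hf : AEMeasurable f μ) {r : ℝ} (hr : 1 < r) :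
    (∫⁻ a, f a ∂μ) ^ r ≤ μ Set.univ ^ (r - 1) * ∫⁻ a, f a ^ r ∂μ := by
  have hpq : r.HolderConjugate (r / (r - 1)) := Real.HolderConjugate.conjExponent hr
  have key := ENNReal.lintegral_mul_le_Lp_mul_Lq μ hpq hf aemeasurable_const (g := fun _ => 1)
  simp only [Pi.mul_apply, mul_one, ENNReal.one_rpow, lintegral_const, one_mul] at key
  have h1 : (∫⁻ a, f a ∂μ) ^ r ≤
      ((∫⁻ a, f a ^ r ∂μ) ^ (1 / r) * (μ Set.univ) ^ (1 / (r / (r - 1)))) ^ r :=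
    ENNReal.rpow_le_rpow key (by linarith)
  refine h1.trans (le_of_eq ?_)
  rw [ENNReal.mul_rpow_of_nonneg _ _ (by linarith : (0:ℝ) ≤ r), ← ENNReal.rpow_mul,
    ← ENNReal.rpow_mul]
  have hr0 : r ≠ 0 := by linarith
  rw [one_div_mul_eq_div, div_self hr0, ENNReal.rpow_one,
    show 1 / (r / (r - 1)) * r = r - 1 by field_simp, mul_comm]

lemma ofReal_sq (x : ℝ) : ENNReal.ofReal (x ^ 2) = ENNReal.ofReal |x| ^ (2 : ℝ) := by
  rw [← sq_abs, ENNReal.ofReal_pow (abs_nonneg x), ENNReal.rpow_two]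

/-- Cauchy–Schwarz bound for the integral against a signed measure, unconditional. -/
lemma keyA {α : Type*} [MeasurableSpace α] (ρ : SignedMeasure α) (f : α → ℝ)
    (hf : Measurable f) :
    ENNReal.ofReal ((∫ w, f w ∂ρ.toJordanDecomposition.posPart -
        ∫ w, f w ∂ρ.toJordanDecomposition.negPart) ^ 2) ≤
      ρ.totalVariation Set.univ * ∫⁻ w, ENNReal.ofReal (f w ^ 2) ∂ρ.totalVariation := by
  set ν := ρ.totalVariation with hν
  have hνdef : ν = ρ.toJordanDecomposition.posPart + ρ.toJordanDecomposition.negPart := rfl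
  have hcs : (∫⁻ w, ENNReal.ofReal |f w| ∂ν) ^ (2:ℝ) ≤
      ν Set.univ ^ ((2:ℝ) - 1) * ∫⁻ w, ENNReal.ofReal |f w| ^ (2:ℝ) ∂ν :=
    jensenHelper ν ((ENNReal.measurable_ofReal.comp hf.abs).aemeasurable) one_lt_two
  have hrw : ∀ w, ENNReal.ofReal |f w| ^ (2:ℝ) = ENNReal.ofReal (f w ^ 2) := fun w =>
    (ofReal_sq (f w)).symm
  simp only [hrw, ENNReal.rpow_one, show (2:ℝ) - 1 = 1 by norm_num] at hcs
  by_cases hInt : Integrable f ν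
  · have hintp : Integrable f ρ.toJordanDecomposition.posPart :=
      hInt.mono_measure (hνdef ▸ Measure.le_add_right le_rfl)
    have hintn : Integrable f ρ.toJordanDecomposition.negPart :=
      hInt.mono_measure (hνdef ▸ Measure.le_add_left le_rfl)
    have habs : |∫ w, f w ∂ρ.toJordanDecomposition.posPart -
        ∫ w, f w ∂ρ.toJordanDecomposition.negPart| ≤ ∫ w, |f w| ∂ν := by
      rw [hνdef, integral_add_measure hintp.abs hintn.abs]
      calc _ ≤ |∫ w, f w ∂ρ.toJordanDecomposition.posPart| +
          |∫ w, f w ∂ρ.toJordanDecomposition.negPart| := abs_sub _ _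
        _ ≤ _ := add_le_add
          (by simpa [Real.norm_eq_abs] using
            norm_integral_le_integral_norm (μ := ρ.toJordanDecomposition.posPart) f)
          (by simpa [Real.norm_eq_abs] using
            norm_integral_le_integral_norm (μ := ρ.toJordanDecomposition.negPart) f)
    calc ENNReal.ofReal ((∫ w, f w ∂ρ.toJordanDecomposition.posPart -
            ∫ w, f w ∂ρ.toJordanDecomposition.negPart) ^ 2)
        = ENNReal.ofReal |∫ w, f w ∂ρ.toJordanDecomposition.posPart -
            ∫ w, f w ∂ρ.toJordanDecomposition.negPart| ^ (2:ℝ) := ofReal_sq _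
      _ ≤ ENNReal.ofReal (∫ w, |f w| ∂ν) ^ (2:ℝ) :=
          ENNReal.rpow_le_rpow (ENNReal.ofReal_le_ofReal habs) (by norm_num)
      _ = (∫⁻ w, ENNReal.ofReal |f w| ∂ν) ^ (2:ℝ) := by
          rw [ofReal_integral_eq_lintegral_ofReal hInt.abs
            (Filter.Eventually.of_forall fun w => abs_nonneg _)]
      _ ≤ _ := hcs
  · have htop : ∫⁻ w, ENNReal.ofReal |f w| ∂ν = ⊤ := by
      by_contra hne
      exact hInt ⟨hf.aestronglyMeasurable, by
        simp only [HasFiniteIntegral]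
        simpa only [← Real.enorm_eq_ofReal_abs] using lt_top_iff_ne_top.mpr hne⟩
    rw [htop] at hcs
    simp only [ENNReal.top_rpow_of_pos (by norm_num : (0:ℝ) < 2), top_le_iff] at hcs
    rw [hcs]
    exact le_top

/-- A function square-integrable w.r.t. a finite measure is integrable. -/
lemma integrable_of_sq {α : Type*} [MeasurableSpace α] (μ : Measure α) [IsFiniteMeasure μ]
    {f : α → ℝ} (hf : Measurable f) (h : ∫⁻ w, ENNReal.ofReal (f w ^ 2) ∂μ < ⊤) :
    Integrable f μ := by
  refine ⟨hf.aestronglyMeasurable, ?_⟩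
  have hcs := jensenHelper μ (f := fun w => ENNReal.ofReal |f w|)
    ((ENNReal.measurable_ofReal.comp hf.abs).aemeasurable) one_lt_two
  simp only [show (2:ℝ) - 1 = 1 by norm_num, ENNReal.rpow_one] at hcs
  have hrw : ∀ w, ENNReal.ofReal |f w| ^ (2:ℝ) = ENNReal.ofReal (f w ^ 2) := fun w =>
    (ofReal_sq (f w)).symm
  simp only [hrw] at hcs
  have hfin : (∫⁻ w, ENNReal.ofReal |f w| ∂μ) ^ (2:ℝ) < ⊤ :=
    hcs.trans_lt (ENNReal.mul_lt_top (measure_lt_top μ _) h)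
  rw [ENNReal.rpow_lt_top_iff_of_pos (by norm_num : (0:ℝ) < 2)] at hfin
  simp only [HasFiniteIntegral]
  simpa only [← Real.enorm_eq_ofReal_abs] using hfin

/-- Change of variables `q = r + w` in a set `lintegral`. -/
lemma shift_eq {G : Type*} [MeasurableSpace G] [AddCommGroup G] [MeasurableAdd G]
    (μ : Measure G) [μ.IsAddRightInvariant] (w : G) (F : G → ℝ≥0∞) (S : Set G) :
    ∫⁻ q in S, F (q - w) ∂μ = ∫⁻ r in (· + w) ⁻¹' S, F r ∂μ := by
  have := (measurePreserving_add_right μ w).setLIntegral_comp_preimage_emb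
    (MeasurableEquiv.addRight w).measurableEmbedding (fun q => F (q - w)) S
  simp only [MeasurableEquiv.coe_addRight, add_sub_cancel_right] at this ⊢
  exact this.symm

lemma shift_eq' {G : Type*} [MeasurableSpace G] [AddCommGroup G] [MeasurableAdd G]
    (μ : Measure G) [μ.IsAddRightInvariant] (w : G) (F : G → ℝ≥0∞) (S : Set G) :
    ∫⁻ r in (· + w) ⁻¹' S, F (r + w) ∂μ = ∫⁻ q in S, F q ∂μ := by
  have := (measurePreserving_add_right μ w).setLIntegral_comp_preimage_emb
    (MeasurableEquiv.addRight w).measurableEmbedding F S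
  simpa only [MeasurableEquiv.coe_addRight] using this

/-- A set `lintegral` of a function vanishing off `s` is monotone through `s ∩ A ⊆ B`. -/
lemma lintegral_zero_off_bound {α : Type*} [MeasurableSpace α] (μ : Measure α)
    (f : α → ℝ≥0∞) {s A B : Set α} (hs : MeasurableSet s) (h0 : ∀ a ∉ s, f a = 0)
    (hsub : s ∩ A ⊆ B) : ∫⁻ a in A, f a ∂μ ≤ ∫⁻ a in B, f a ∂μ := by
  have hind : ∀ a, f a = s.indicator f a := fun a => by
    by_cases h : a ∈ s
    · rw [indicator_of_mem h]
    · rw [indicator_of_notMem h, h0 a h]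
  calc ∫⁻ a in A, f a ∂μ = ∫⁻ a in A, s.indicator f a ∂μ := by simp_rw [← hind]
    _ = ∫⁻ a in s ∩ A, f a ∂μ := by
        rw [lintegral_indicator hs, Measure.restrict_restrict hs]
    _ ≤ _ := lintegral_mono_set hsub

lemma prodset_eq {E : Type*} [MeasureSpace E] [SFinite (volume : Measure E)]
    (F : ℝ × E → ℝ≥0∞) (hF : Measurable F) (A : Set ℝ) :
    ∫⁻ q in A ×ˢ (univ : Set E), F q ∂volume =
      ∫⁻ t in A, ∫⁻ y, F (t, y) ∂volume ∂volume := by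
  rw [Measure.volume_eq_prod, ← Measure.restrict_univ (μ := (volume : Measure E)),
    ← Measure.prod_restrict, lintegral_prod _ (hF.aemeasurable)]
  simp [Measure.restrict_univ]

lemma preimage_addRight_prod {E' : Type*} [Add E'] (w : ℝ × E') (A : Set ℝ) :
    (· + w) ⁻¹' (A ×ˢ (univ : Set E')) = ((· + w.1) ⁻¹' A) ×ˢ (univ : Set E') := by
  ext r; simp [Set.mem_prod, Prod.fst_add]

lemma strip_bound (Gf : ℝ → ℝ≥0∞) (hG : AEMeasurable Gf (volume : Measure ℝ))
    {pp : ℝ} (hpp : 1 < pp) (T τ : ℝ) (hsub : Ico (0:ℝ) τ ⊆ Icc 0 T) :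
    ∫⁻ t in Ico (0:ℝ) τ, Gf t ≤
      (∫⁻ t in Icc (0:ℝ) T, Gf t ^ pp) ^ (1 / pp) * ENNReal.ofReal τ ^ ((pp - 1) / pp) := by
  have hpq : pp.HolderConjugate (pp / (pp - 1)) := Real.HolderConjugate.conjExponent hpp
  have key := ENNReal.lintegral_mul_le_Lp_mul_Lq (volume.restrict (Ico (0:ℝ) τ)) hpq
    (hG.restrict) aemeasurable_const (g := fun _ => 1)
  simp only [Pi.mul_apply, mul_one, ENNReal.one_rpow, lintegral_const, one_mul,
    Measure.restrict_apply MeasurableSet.univ, Set.univ_inter, Real.volume_Ico, sub_zero] at key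
  rw [show 1 / (pp / (pp - 1)) = (pp - 1) / pp by field_simp] at key
  refine key.trans (mul_le_mul' (ENNReal.rpow_le_rpow (lintegral_mono_set hsub)
    (by positivity)) le_rfl)


/-- The convolution `(ρ*g)(p) = ∫ g(p - q) ρ(dq)` of a function with a signed measure, via the
Jordan decomposition.  For `ρ` supported on `ℝ₊×ℝ^d` and `g` vanishing at negative times this
is `∫₀^t ∫_{ℝ^d} g(t-s, x-y) ρ(ds,dy)` at `p = (t,x)`. -/
noncomputable def smConvFun {E : Type*} [MeasurableSpace E] [Sub E]
    (μ : MeasureTheory.SignedMeasure E) (h : E → ℝ) (p : E) : ℝ :=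
  (∫ q, h (p - q) ∂μ.toJordanDecomposition.posPart) -
  (∫ q, h (p - q) ∂μ.toJordanDecomposition.negPart)

set_option maxHeartbeats 2000000 in
/-- if `g` satisfies the square-translation estimate (i) with exponent `u` and
the mixed-norm bound (ii) with exponent `p > 1` on `[0,T]×ℝ^d`, then so does `ρ*g`, with the
translation estimate weakened to `C'(|(τ,ξ)|^u + |(τ,ξ)|^{(p-1)/p})`. -/
theorem stmt13 (d : ℕ) (hd : 1 ≤ d) (T : ℝ) (hT : 0 < T)
    (ρ : SignedMeasure (ℝ × EuclideanSpace ℝ (Fin d)))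
    (hρsupp : ρ.totalVariation
      (Set.Ici (0 : ℝ) ×ˢ (Set.univ : Set (EuclideanSpace ℝ (Fin d))))ᶜ = 0)
    (g : ℝ × EuclideanSpace ℝ (Fin d) → ℝ) (hgmeas : Measurable g)
    (hg0 : ∀ p : ℝ × EuclideanSpace ℝ (Fin d), p.1 < 0 → g p = 0)
    (u : ℝ) (hu : 0 < u) (C : ℝ) (δ : ℝ) (hδ : 0 < δ)
    (hHolder : ∀ (τ : ℝ) (ξ : EuclideanSpace ℝ (Fin d)),
      Real.sqrt (τ ^ 2 + ‖ξ‖ ^ 2) ≤ δ →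
      (∫⁻ p in Set.Icc (0 : ℝ) T ×ˢ (Set.univ : Set (EuclideanSpace ℝ (Fin d))),
          ENNReal.ofReal ((g p - g (p.1 + τ, p.2 + ξ)) ^ 2) ∂volume) ≤
        ENNReal.ofReal (C * Real.sqrt (τ ^ 2 + ‖ξ‖ ^ 2) ^ u))
    (p : ℝ) (hp : 1 < p)
    (hInt : (∫⁻ t in Set.Icc (0 : ℝ) T,
        (∫⁻ y, ENNReal.ofReal ((g (t, y)) ^ 2) ∂volume) ^ p ∂volume) < ⊤) :
    (∃ C' : ℝ, ∃ δ' : ℝ, 0 < δ' ∧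
      ∀ (τ : ℝ) (ξ : EuclideanSpace ℝ (Fin d)),
        Real.sqrt (τ ^ 2 + ‖ξ‖ ^ 2) ≤ δ' →
        (∫⁻ q in Set.Icc (0 : ℝ) T ×ˢ (Set.univ : Set (EuclideanSpace ℝ (Fin d))),
            ENNReal.ofReal ((smConvFun ρ g q - smConvFun ρ g (q.1 + τ, q.2 + ξ)) ^ 2)
              ∂volume) ≤
          ENNReal.ofReal (C' * (Real.sqrt (τ ^ 2 + ‖ξ‖ ^ 2) ^ u +
            Real.sqrt (τ ^ 2 + ‖ξ‖ ^ 2) ^ ((p - 1) / p)))) ∧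
    (∫⁻ t in Set.Icc (0 : ℝ) T,
        (∫⁻ y, ENNReal.ofReal ((smConvFun ρ g (t, y)) ^ 2) ∂volume) ^ p ∂volume) < ⊤ := by
  classical
  have hp0 : (0:ℝ) < p := lt_trans one_pos hp
  have hβ0 : (0:ℝ) ≤ (p - 1) / p := div_nonneg (by linarith) hp0.le
  haveI hfinν : IsFiniteMeasure ρ.totalVariation := by
    rw [SignedMeasure.totalVariation]; infer_instance
  haveI hRI : (volume : Measure (ℝ × EuclideanSpace ℝ (Fin d))).IsAddRightInvariant := by
    rw [Measure.volume_eq_prod]; infer_instance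
  set ν := ρ.totalVariation with hνdef
  set S : Set (ℝ × EuclideanSpace ℝ (Fin d)) :=
    Set.Icc (0:ℝ) T ×ˢ (Set.univ : Set (EuclideanSpace ℝ (Fin d))) with hSdef
  set φ : ℝ × EuclideanSpace ℝ (Fin d) → ℝ≥0∞ :=
    fun r => ENNReal.ofReal (g r ^ 2) with hφdef
  have hφm : Measurable φ := ENNReal.measurable_ofReal.comp (hgmeas.pow_const 2)
  have hφ0 : ∀ r : ℝ × EuclideanSpace ℝ (Fin d), r.1 < 0 → φ r = 0 := fun r hr => by
    simp only [hφdef, hg0 r hr]; simp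
  set G : ℝ → ℝ≥0∞ := fun t => ∫⁻ y, φ (t, y) ∂volume with hGdef
  have hGm : Measurable G := hφm.lintegral_prod_right'
  have hGzero : ∀ t : ℝ, t < 0 → G t = 0 := fun t ht => by
    have h0 : ∀ y, φ (t, y) = 0 := fun y => hφ0 (t, y) ht
    simp only [hGdef, h0, lintegral_zero]
  have hMne : (∫⁻ t in Set.Icc (0:ℝ) T, G t ^ p ∂volume) ≠ ⊤ := hInt.ne
  set M := ∫⁻ t in Set.Icc (0:ℝ) T, G t ^ p ∂volume with hMdef
  set I₀ := ∫⁻ q in S, φ q ∂volume with hI0def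
  have hI₀G : I₀ = ∫⁻ t in Set.Icc (0:ℝ) T, G t ∂volume := prodset_eq φ hφm _
  have hI₀ne : I₀ ≠ ⊤ := by
    rw [hI₀G]
    have hj := jensenHelper (volume.restrict (Set.Icc (0:ℝ) T)) hGm.aemeasurable hp
    have hTvol : (volume.restrict (Set.Icc (0:ℝ) T)) Set.univ ≠ ⊤ := by
      simp [Real.volume_Icc]
    intro htop
    rw [htop, ENNReal.top_rpow_of_pos hp0, top_le_iff] at hj
    exact (ENNReal.mul_lt_top
      (lt_top_iff_ne_top.mpr (ENNReal.rpow_ne_top_of_nonneg (by linarith) hTvol))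
      (lt_top_iff_ne_top.mpr hMne)).ne hj
  have hsupp : ∀ᵐ w ∂ν, 0 ≤ w.1 := by
    rw [ae_iff]
    refine measure_mono_null (fun w hw => ?_) hρsupp
    simp only [Set.mem_setOf_eq, not_le] at hw
    simp only [Set.mem_compl_iff, Set.mem_prod, Set.mem_Ici, Set.mem_univ, and_true, not_le]
    exact hw
  set νu := ν Set.univ with hνudef
  have hνune : νu ≠ ⊤ := (measure_lt_top ν _).ne
  set K := M ^ (1 / p) with hKdef
  have hKne : K ≠ ⊤ := ENNReal.rpow_ne_top_of_nonneg (by positivity) hMne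
  set R := νu.toReal with hRdef
  set Kr := K.toReal with hKrdef
  have hνuR : νu = ENNReal.ofReal R := (ENNReal.ofReal_toReal hνune).symm
  have hKKr : K = ENNReal.ofReal Kr := (ENNReal.ofReal_toReal hKne).symm
  have hR0 : (0:ℝ) ≤ R := ENNReal.toReal_nonneg
  have hKr0 : (0:ℝ) ≤ Kr := ENNReal.toReal_nonneg
  have hposle : ρ.toJordanDecomposition.posPart ≤ ν := Measure.le_add_right le_rfl
  have hnegle : ρ.toJordanDecomposition.negPart ≤ ν := Measure.le_add_left le_rfl
  refine ⟨⟨R ^ 2 * (|C| + Kr), min δ T, lt_min hδ hT, ?_⟩, ?_⟩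
  · -- Part (a)
    intro τ ξ hθle
    set θ := Real.sqrt (τ ^ 2 + ‖ξ‖ ^ 2) with hθdef
    have hθ0 : 0 ≤ θ := Real.sqrt_nonneg _
    have hθδ : θ ≤ δ := le_trans hθle (min_le_left _ _)
    have hθT : θ ≤ T := le_trans hθle (min_le_right _ _)
    have hτθ : τ ≤ θ := by
      calc τ ≤ |τ| := le_abs_self τ
        _ = Real.sqrt (τ ^ 2) := (Real.sqrt_sq_eq_abs τ).symm
        _ ≤ θ := Real.sqrt_le_sqrt (by nlinarith [sq_nonneg ‖ξ‖])
    set v : ℝ × EuclideanSpace ℝ (Fin d) := (τ, ξ) with hvdef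
    set ψ : ℝ × EuclideanSpace ℝ (Fin d) → ℝ≥0∞ :=
      fun r => ENNReal.ofReal ((g r - g (r + v)) ^ 2) with hψdef
    have hψm : Measurable ψ := ENNReal.measurable_ofReal.comp
      ((hgmeas.sub (hgmeas.comp (measurable_add_const v))).pow_const 2)
    have hHold : ∫⁻ r in S, ψ r ∂volume ≤ ENNReal.ofReal (C * θ ^ u) := hHolder τ ξ hθδ
    have hsubIco : Set.Ico (0:ℝ) τ ⊆ Set.Icc 0 T :=
      fun x hx => ⟨hx.1, le_trans hx.2.le (le_trans hτθ hθT)⟩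
    have hstrip : ∫⁻ t in Set.Ico (0:ℝ) τ, G t ∂volume ≤
        K * ENNReal.ofReal θ ^ ((p - 1) / p) := by
      refine (strip_bound G hGm.aemeasurable hp T τ hsubIco).trans ?_
      exact mul_le_mul' le_rfl (ENNReal.rpow_le_rpow (ENNReal.ofReal_le_ofReal hτθ) hβ0)
    have hsplit : ∀ w : ℝ × EuclideanSpace ℝ (Fin d), 0 ≤ w.1 →
        (∫⁻ q in S, ψ (q - w) ∂volume) ≤
          K * ENNReal.ofReal θ ^ ((p - 1) / p) + ENNReal.ofReal (C * θ ^ u) := by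
      intro w hw
      rw [shift_eq volume w ψ S, hSdef, preimage_addRight_prod, Set.preimage_add_const_Icc]
      have hsub2 : Set.Icc (0 - w.1) (T - w.1) ×ˢ
            (Set.univ : Set (EuclideanSpace ℝ (Fin d))) ⊆
          (Set.Iio (0:ℝ) ×ˢ Set.univ) ∪ (Set.Icc (0:ℝ) T ×ˢ Set.univ) := by
        rintro ⟨x, y⟩ ⟨hx, -⟩
        by_cases hx0 : x < 0
        · exact Or.inl ⟨hx0, trivial⟩
        · exact Or.inr ⟨⟨not_lt.mp hx0, le_trans hx.2 (by linarith)⟩, trivial⟩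
      refine le_trans (lintegral_mono_set hsub2) ?_
      refine le_trans (lintegral_union_le _ _ _) (add_le_add ?_ hHold)
      -- strip part
      have hcong : ∫⁻ r in Set.Iio (0:ℝ) ×ˢ (Set.univ : Set (EuclideanSpace ℝ (Fin d))),
            ψ r ∂volume
          = ∫⁻ r in Set.Iio (0:ℝ) ×ˢ (Set.univ : Set (EuclideanSpace ℝ (Fin d))),
            φ (r + v) ∂volume := by
        refine setLIntegral_congr_fun (measurableSet_Iio.prod MeasurableSet.univ)
          (fun r hr => ?_)
        have h0 : g r = 0 := hg0 r hr.1
        simp only [hψdef, hφdef, h0, zero_sub, neg_sq]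
      rw [hcong]
      have hsh : ∫⁻ r in Set.Iio (0:ℝ) ×ˢ (Set.univ : Set (EuclideanSpace ℝ (Fin d))),
            φ (r + v) ∂volume
          = ∫⁻ q in Set.Iio τ ×ˢ (Set.univ : Set (EuclideanSpace ℝ (Fin d))),
            φ q ∂volume := by
        have h1 := shift_eq' volume v φ
          (Set.Iio τ ×ˢ (Set.univ : Set (EuclideanSpace ℝ (Fin d))))
        rw [preimage_addRight_prod, Set.preimage_add_const_Iio] at h1
        simpa [sub_self, show v.1 = τ from rfl] using h1
      rw [hsh]
      refine le_trans (lintegral_zero_off_bound volume φ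
        (measurableSet_Ici.prod MeasurableSet.univ)
        (fun r hr => hφ0 r (by simpa [Set.mem_prod, not_le] using hr))
        (B := Set.Ico (0:ℝ) τ ×ˢ (Set.univ : Set (EuclideanSpace ℝ (Fin d))))
        ?_) ?_
      · rintro r ⟨⟨h1, -⟩, ⟨h2, -⟩⟩
        exact ⟨⟨h1, h2⟩, trivial⟩
      · rw [prodset_eq φ hφm]
        exact hstrip
    -- a.e. integrability
    obtain ⟨τm, hτmdef⟩ : ∃ τm : ℝ, τm = max τ 0 := ⟨_, rfl⟩
    have hτm0 : (0:ℝ) ≤ τm := hτmdef ▸ le_max_right τ 0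
    set I₁ := ∫⁻ q in Set.Icc (0:ℝ) (T + τm) ×ˢ
      (Set.univ : Set (EuclideanSpace ℝ (Fin d))), φ q ∂volume with hI1def
    have hI₁ne : I₁ ≠ ⊤ := by
      have hsubU : Set.Icc (0:ℝ) (T + τm) ⊆ Set.Icc 0 T ∪ Set.Icc τ (T + τ) := by
        intro x hx
        by_cases hxT : x ≤ T
        · exact Or.inl ⟨hx.1, hxT⟩
        · have hτpos : 0 < τ := by
            by_contra hτ
            push_neg at hτ
            rw [hτmdef, max_eq_right hτ, add_zero] at hx
            exact hxT hx.2
          refine Or.inr ⟨le_trans (le_trans hτθ hθT) (not_le.mp hxT).le, ?_⟩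
          have hmm : τm = τ := hτmdef.trans (max_eq_left hτpos.le)
          rw [hmm] at hx
          exact hx.2
      have hJ : ∫⁻ q in Set.Icc τ (T + τ) ×ˢ
            (Set.univ : Set (EuclideanSpace ℝ (Fin d))), φ q ∂volume
          ≤ 2 * ENNReal.ofReal (C * θ ^ u) + 2 * I₀ := by
        have hsh : ∫⁻ q in Set.Icc τ (T + τ) ×ˢ
              (Set.univ : Set (EuclideanSpace ℝ (Fin d))), φ q ∂volume
            = ∫⁻ r in S, φ (r + v) ∂volume := by
          have h1 := shift_eq' volume v φ
            (Set.Icc τ (T + τ) ×ˢ (Set.univ : Set (EuclideanSpace ℝ (Fin d))))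
          rw [preimage_addRight_prod, Set.preimage_add_const_Icc] at h1
          rw [← h1, hSdef]
          norm_num [show v.1 = τ from rfl]
        rw [hsh]
        have hpt : ∀ r : ℝ × EuclideanSpace ℝ (Fin d), φ (r + v) ≤ 2 * ψ r + 2 * φ r := by
          intro r
          simp only [hφdef, hψdef]
          calc ENNReal.ofReal (g (r + v) ^ 2)
              ≤ ENNReal.ofReal (2 * (g r - g (r + v)) ^ 2 + 2 * g r ^ 2) :=
                ENNReal.ofReal_le_ofReal (by nlinarith [sq_nonneg (2 * g r - g (r + v))])
            _ = 2 * ENNReal.ofReal ((g r - g (r + v)) ^ 2) + 2 * ENNReal.ofReal (g r ^ 2) := by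
                rw [ENNReal.ofReal_add (by positivity) (by positivity),
                  ENNReal.ofReal_mul (by norm_num), ENNReal.ofReal_mul (by norm_num)]
                norm_num
        calc ∫⁻ r in S, φ (r + v) ∂volume
            ≤ ∫⁻ r in S, (2 * ψ r + 2 * φ r) ∂volume := lintegral_mono hpt
          _ = 2 * ∫⁻ r in S, ψ r ∂volume + 2 * ∫⁻ r in S, φ r ∂volume := by
              rw [lintegral_add_left (hψm.const_mul 2), lintegral_const_mul 2 hψm,
                lintegral_const_mul 2 hφm]
          _ ≤ 2 * ENNReal.ofReal (C * θ ^ u) + 2 * I₀ := by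
              gcongr
      have hle : I₁ ≤ I₀ + (2 * ENNReal.ofReal (C * θ ^ u) + 2 * I₀) := by
        calc I₁ ≤ ∫⁻ q in (Set.Icc (0:ℝ) T ∪ Set.Icc τ (T + τ)) ×ˢ
              (Set.univ : Set (EuclideanSpace ℝ (Fin d))), φ q ∂volume :=
            lintegral_mono_set (fun x hx => ⟨hsubU hx.1, hx.2⟩)
          _ ≤ I₀ + (2 * ENNReal.ofReal (C * θ ^ u) + 2 * I₀) := by
              rw [Set.union_prod]
              exact le_trans (lintegral_union_le _ _ _) (add_le_add le_rfl hJ)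
      exact ne_top_of_le_ne_top (by
        refine ENNReal.add_ne_top.mpr ⟨hI₀ne, ENNReal.add_ne_top.mpr
          ⟨ENNReal.mul_ne_top (by norm_num) ENNReal.ofReal_ne_top,
           ENNReal.mul_ne_top (by norm_num) hI₀ne⟩⟩) hle
    have htrans : ∀ (F : ℝ × EuclideanSpace ℝ (Fin d) → ℝ≥0∞),
        (∀ r : ℝ × EuclideanSpace ℝ (Fin d), r.1 < 0 → F r = 0) →
        ∀ (w : ℝ × EuclideanSpace ℝ (Fin d)), -τm ≤ w.1 →
        (∫⁻ q in S, F (q - w) ∂volume) ≤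
          ∫⁻ q in Set.Icc (0:ℝ) (T + τm) ×ˢ
            (Set.univ : Set (EuclideanSpace ℝ (Fin d))), F q ∂volume := by
      intro F hF0 w hc
      rw [shift_eq volume w F S, hSdef, preimage_addRight_prod, Set.preimage_add_const_Icc]
      refine lintegral_zero_off_bound volume F (measurableSet_Ici.prod MeasurableSet.univ)
        (fun r hr => hF0 r (by simpa [Set.mem_prod, not_le] using hr)) ?_
      rintro ⟨x, y⟩ ⟨⟨hx0, -⟩, ⟨hx1, -⟩⟩
      exact ⟨⟨hx0, le_trans hx1.2 (by linarith)⟩, trivial⟩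
    have hE1 : (∫⁻ q in S, (∫⁻ w, φ (q - w) ∂ν) ∂volume) ≠ ⊤ := by
      have hmeas : Measurable (Function.uncurry fun (q w : ℝ × EuclideanSpace ℝ (Fin d)) =>
          φ (q - w)) := hφm.comp (measurable_fst.sub measurable_snd)
      have hb : (∫⁻ q in S, (∫⁻ w, φ (q - w) ∂ν) ∂volume) ≤ I₁ * νu := by
        calc ∫⁻ q in S, (∫⁻ w, φ (q - w) ∂ν) ∂volume
            = ∫⁻ w, (∫⁻ q in S, φ (q - w) ∂volume) ∂ν :=
              lintegral_lintegral_swap hmeas.aemeasurable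
          _ ≤ ∫⁻ _w, I₁ ∂ν := by
              refine lintegral_mono_ae (hsupp.mono fun w hw => ?_)
              exact htrans φ hφ0 w (by linarith)
          _ = I₁ * νu := lintegral_const _
      exact ne_top_of_le_ne_top (ENNReal.mul_ne_top hI₁ne hνune) hb
    have hE2 : (∫⁻ q in S, (∫⁻ w, φ (q + v - w) ∂ν) ∂volume) ≠ ⊤ := by
      have hmeas : Measurable (Function.uncurry fun (q w : ℝ × EuclideanSpace ℝ (Fin d)) =>
          φ (q + v - w)) := hφm.comp ((measurable_fst.add_const v).sub measurable_snd)
      have hb : (∫⁻ q in S, (∫⁻ w, φ (q + v - w) ∂ν) ∂volume) ≤ I₁ * νu := by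
        calc ∫⁻ q in S, (∫⁻ w, φ (q + v - w) ∂ν) ∂volume
            = ∫⁻ w, (∫⁻ q in S, φ (q + v - w) ∂volume) ∂ν :=
              lintegral_lintegral_swap hmeas.aemeasurable
          _ ≤ ∫⁻ _w, I₁ ∂ν := by
              refine lintegral_mono_ae (hsupp.mono fun w hw => ?_)
              have heq : ∫⁻ q in S, φ (q + v - w) ∂volume
                  = ∫⁻ q in S, φ (q - (w - v)) ∂volume :=
                lintegral_congr fun q => by rw [show q + v - w = q - (w - v) by abel]
              rw [heq]
              refine htrans φ hφ0 (w - v) ?_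
              have h1 : (w - v).1 = w.1 - τ := rfl
              have h2 : τ ≤ τm := hτmdef ▸ le_max_left τ 0
              rw [h1]; linarith
          _ = I₁ * νu := lintegral_const _
      exact ne_top_of_le_ne_top (ENNReal.mul_ne_top hI₁ne hνune) hb
    have hP1m : Measurable fun q : ℝ × EuclideanSpace ℝ (Fin d) => ∫⁻ w, φ (q - w) ∂ν :=
      Measurable.lintegral_prod_right'
        (f := fun z : (ℝ × EuclideanSpace ℝ (Fin d)) × (ℝ × EuclideanSpace ℝ (Fin d)) =>
          φ (z.1 - z.2)) (hφm.comp (measurable_fst.sub measurable_snd))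
    have hP2m : Measurable fun q : ℝ × EuclideanSpace ℝ (Fin d) => ∫⁻ w, φ (q + v - w) ∂ν :=
      Measurable.lintegral_prod_right'
        (f := fun z : (ℝ × EuclideanSpace ℝ (Fin d)) × (ℝ × EuclideanSpace ℝ (Fin d)) =>
          φ (z.1 + v - z.2)) (hφm.comp ((measurable_fst.add_const v).sub measurable_snd))
    have haept : ∀ᵐ q ∂(volume.restrict S),
        ENNReal.ofReal ((smConvFun ρ g q - smConvFun ρ g (q + v)) ^ 2) ≤
          νu * ∫⁻ w, ENNReal.ofReal ((g (q - w) - g (q + v - w)) ^ 2) ∂ν := by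
      filter_upwards [ae_lt_top hP1m hE1, ae_lt_top hP2m hE2] with q hq1 hq2
      have hint1 : Integrable (fun w => g (q - w)) ν :=
        integrable_of_sq ν (hgmeas.comp (measurable_const.sub measurable_id)) hq1
      have hint2 : Integrable (fun w => g (q + v - w)) ν :=
        integrable_of_sq ν (hgmeas.comp (measurable_const.sub measurable_id)) hq2
      have hdiff : smConvFun ρ g q - smConvFun ρ g (q + v) =
          (∫ w, (g (q - w) - g (q + v - w)) ∂ρ.toJordanDecomposition.posPart) -
          (∫ w, (g (q - w) - g (q + v - w)) ∂ρ.toJordanDecomposition.negPart) := by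
        rw [integral_sub (hint1.mono_measure hposle) (hint2.mono_measure hposle),
          integral_sub (hint1.mono_measure hnegle) (hint2.mono_measure hnegle)]
        show smConvFun ρ g q - smConvFun ρ g (q + v) =
          (∫ w, g (q - w) ∂ρ.toJordanDecomposition.posPart) -
            (∫ w, g (q + v - w) ∂ρ.toJordanDecomposition.posPart) -
          ((∫ w, g (q - w) ∂ρ.toJordanDecomposition.negPart) -
            (∫ w, g (q + v - w) ∂ρ.toJordanDecomposition.negPart))
        show (∫ w, g (q - w) ∂ρ.toJordanDecomposition.posPart) -
            (∫ w, g (q - w) ∂ρ.toJordanDecomposition.negPart) -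
          ((∫ w, g (q + v - w) ∂ρ.toJordanDecomposition.posPart) -
            (∫ w, g (q + v - w) ∂ρ.toJordanDecomposition.negPart)) = _
        ring
      rw [hdiff]
      exact keyA ρ _ ((hgmeas.comp (measurable_const.sub measurable_id)).sub
        (hgmeas.comp (measurable_const.sub measurable_id)))
    have hmeasσ : Measurable (Function.uncurry
        fun (q w : ℝ × EuclideanSpace ℝ (Fin d)) =>
          ENNReal.ofReal ((g (q - w) - g (q + v - w)) ^ 2)) :=
      ENNReal.measurable_ofReal.comp
        (((hgmeas.comp (measurable_fst.sub measurable_snd)).sub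
          (hgmeas.comp ((measurable_fst.add_const v).sub measurable_snd))).pow_const 2)
    calc ∫⁻ q in S,
          ENNReal.ofReal ((smConvFun ρ g q - smConvFun ρ g (q.1 + τ, q.2 + ξ)) ^ 2) ∂volume
        ≤ ∫⁻ q in S,
            (νu * ∫⁻ w, ENNReal.ofReal ((g (q - w) - g (q + v - w)) ^ 2) ∂ν) ∂volume :=
          lintegral_mono_ae haept
      _ = νu * ∫⁻ q in S,
            (∫⁻ w, ENNReal.ofReal ((g (q - w) - g (q + v - w)) ^ 2) ∂ν) ∂volume :=
          lintegral_const_mul' νu _ hνune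
      _ = νu * ∫⁻ w,
            (∫⁻ q in S, ENNReal.ofReal ((g (q - w) - g (q + v - w)) ^ 2) ∂volume) ∂ν :=
          congrArg (fun z => νu * z) (lintegral_lintegral_swap hmeasσ.aemeasurable)
      _ ≤ νu * ∫⁻ _w, (K * ENNReal.ofReal θ ^ ((p - 1) / p) +
            ENNReal.ofReal (C * θ ^ u)) ∂ν := by
          refine mul_le_mul' le_rfl (lintegral_mono_ae (hsupp.mono fun w hw => ?_))
          have heq : (∫⁻ q in S,
                ENNReal.ofReal ((g (q - w) - g (q + v - w)) ^ 2) ∂volume)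
              = ∫⁻ q in S, ψ (q - w) ∂volume :=
            lintegral_congr fun q => by rw [show q + v - w = q - w + v by abel]
          rw [heq]
          exact hsplit w hw
      _ = νu * ((K * ENNReal.ofReal θ ^ ((p - 1) / p) +
            ENNReal.ofReal (C * θ ^ u)) * νu) := by rw [lintegral_const]
      _ ≤ ENNReal.ofReal ((R ^ 2 * (|C| + Kr)) * (θ ^ u + θ ^ ((p - 1) / p))) := by
          rw [hνuR, hKKr, ENNReal.ofReal_rpow_of_nonneg hθ0 hβ0,
            ← ENNReal.ofReal_mul hKr0]
          calc ENNReal.ofReal R * ((ENNReal.ofReal (Kr * θ ^ ((p - 1) / p)) +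
                ENNReal.ofReal (C * θ ^ u)) * ENNReal.ofReal R)
              ≤ ENNReal.ofReal R * ((ENNReal.ofReal (Kr * θ ^ ((p - 1) / p)) +
                ENNReal.ofReal (|C| * θ ^ u)) * ENNReal.ofReal R) := by
                gcongr
                exact le_abs_self C
            _ = ENNReal.ofReal (R * ((Kr * θ ^ ((p - 1) / p) + |C| * θ ^ u) * R)) := by
                rw [← ENNReal.ofReal_add (by positivity) (by positivity),
                  ← ENNReal.ofReal_mul (by positivity), ← ENNReal.ofReal_mul hR0]
            _ ≤ _ := ENNReal.ofReal_le_ofReal (by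
                nlinarith [Real.rpow_nonneg hθ0 u, Real.rpow_nonneg hθ0 ((p - 1) / p),
                  abs_nonneg C, hKr0, hR0, sq_nonneg R,
                  mul_nonneg (mul_nonneg (sq_nonneg R) (abs_nonneg C))
                    (Real.rpow_nonneg hθ0 ((p - 1) / p)),
                  mul_nonneg (mul_nonneg (sq_nonneg R) hKr0) (Real.rpow_nonneg hθ0 u)])
  · -- Part (b)
    have hkey : ∀ q : ℝ × EuclideanSpace ℝ (Fin d),
        ENNReal.ofReal (smConvFun ρ g q ^ 2) ≤ νu * ∫⁻ w, φ (q - w) ∂ν := fun q =>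
      keyA ρ (fun w => g (q - w)) (hgmeas.comp (measurable_const.sub measurable_id))
    have hcne : νu ^ p * νu ^ (p - 1) ≠ ⊤ :=
      ENNReal.mul_ne_top (ENNReal.rpow_ne_top_of_nonneg hp0.le hνune)
        (ENNReal.rpow_ne_top_of_nonneg (by linarith) hνune)
    have hGm' : Measurable (Function.uncurry
        fun (t : ℝ) (w : ℝ × EuclideanSpace ℝ (Fin d)) => G (t - w.1) ^ p) :=
      (hGm.comp (measurable_fst.sub (measurable_fst.comp measurable_snd))).pow_const p
    have hΦ : ∀ t : ℝ, (∫⁻ y, ENNReal.ofReal (smConvFun ρ g (t, y) ^ 2) ∂volume) ≤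
        νu * ∫⁻ w, G (t - w.1) ∂ν := by
      intro t
      have hmeasb : Measurable (Function.uncurry
          fun (y : EuclideanSpace ℝ (Fin d)) (w : ℝ × EuclideanSpace ℝ (Fin d)) =>
            φ ((t, y) - w)) :=
        hφm.comp ((measurable_const.prodMk measurable_fst).sub measurable_snd)
      calc ∫⁻ y, ENNReal.ofReal (smConvFun ρ g (t, y) ^ 2) ∂volume
          ≤ ∫⁻ y, (νu * ∫⁻ w, φ ((t, y) - w) ∂ν) ∂volume :=
            lintegral_mono fun y => hkey (t, y)
        _ = νu * ∫⁻ y, (∫⁻ w, φ ((t, y) - w) ∂ν) ∂volume := lintegral_const_mul' _ _ hνune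
        _ = νu * ∫⁻ w, (∫⁻ y, φ ((t, y) - w) ∂volume) ∂ν :=
            congrArg (fun z => νu * z) (lintegral_lintegral_swap hmeasb.aemeasurable)
        _ = νu * ∫⁻ w, G (t - w.1) ∂ν := by
            refine congrArg (fun z => νu * z) (lintegral_congr fun w => ?_)
            exact lintegral_sub_right_eq_self (fun y' => φ (t - w.1, y')) w.2
    calc ∫⁻ t in Set.Icc (0:ℝ) T,
          (∫⁻ y, ENNReal.ofReal ((smConvFun ρ g (t, y)) ^ 2) ∂volume) ^ p ∂volume
        ≤ ∫⁻ t in Set.Icc (0:ℝ) T,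
            (νu ^ p * (νu ^ (p - 1) * ∫⁻ w, G (t - w.1) ^ p ∂ν)) ∂volume := by
          refine lintegral_mono fun t => ?_
          calc (∫⁻ y, ENNReal.ofReal (smConvFun ρ g (t, y) ^ 2) ∂volume) ^ p
              ≤ (νu * ∫⁻ w, G (t - w.1) ∂ν) ^ p := ENNReal.rpow_le_rpow (hΦ t) hp0.le
            _ = νu ^ p * (∫⁻ w, G (t - w.1) ∂ν) ^ p :=
                ENNReal.mul_rpow_of_nonneg _ _ hp0.le
            _ ≤ νu ^ p * (νu ^ (p - 1) * ∫⁻ w, G (t - w.1) ^ p ∂ν) :=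
                mul_le_mul' le_rfl (jensenHelper ν
                  ((hGm.comp (measurable_const.sub measurable_fst)).aemeasurable) hp)
      _ = (νu ^ p * νu ^ (p - 1)) *
            ∫⁻ t in Set.Icc (0:ℝ) T, (∫⁻ w, G (t - w.1) ^ p ∂ν) ∂volume := by
          rw [← lintegral_const_mul' (νu ^ p * νu ^ (p - 1)) _ hcne]
          exact lintegral_congr fun t => by rw [mul_assoc]
      _ = (νu ^ p * νu ^ (p - 1)) *
            ∫⁻ w, (∫⁻ t in Set.Icc (0:ℝ) T, G (t - w.1) ^ p ∂volume) ∂ν :=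
          congrArg (fun z => (νu ^ p * νu ^ (p - 1)) * z)
            (lintegral_lintegral_swap hGm'.aemeasurable)
      _ ≤ (νu ^ p * νu ^ (p - 1)) * ∫⁻ _w, M ∂ν := by
          refine mul_le_mul' le_rfl (lintegral_mono_ae (hsupp.mono fun w hw => ?_))
          calc ∫⁻ t in Set.Icc (0:ℝ) T, G (t - w.1) ^ p ∂volume
              = ∫⁻ r in (· + w.1) ⁻¹' Set.Icc (0:ℝ) T, G r ^ p ∂volume :=
                shift_eq volume w.1 (fun r => G r ^ p) _
            _ ≤ M := by
                rw [Set.preimage_add_const_Icc]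
                refine lintegral_zero_off_bound volume _ measurableSet_Ici
                  (fun a ha => by
                    rw [hGzero a (by simpa [not_le] using ha), ENNReal.zero_rpow_of_pos hp0])
                  ?_
                rintro x ⟨hx0, hx1⟩
                exact ⟨hx0, le_trans hx1.2 (by linarith)⟩
      _ = (νu ^ p * νu ^ (p - 1)) * (M * νu) := by rw [lintegral_const]
      _ < ⊤ := ENNReal.mul_lt_top (lt_top_iff_ne_top.mpr hcne)
          (ENNReal.mul_lt_top (lt_top_iff_ne_top.mpr hMne) (measure_lt_top ν _))
end

section
/- Let λ, λ' > 0, τ ≥ 0 and ξ ∈ ℝ. Then ∫₀^∞ ∫_ℝ e^{−λs − λ'|y|} · e^{−λ(s+τ) − λ'|y+ξ|} dy ds = (e^{−λτ} / (2λ)) · e^{−λ'|ξ|} ( |ξ| + 1/λ' ). In particular ∫_ℝ e^{−λ'|y| − λ'|y+ξ|} dy = e^{−λ'|ξ|}(|ξ| + 1/λ'), so the normalized autocovariance (autocorrelation) in dimension d = 1 equals e^{−λτ}(λ'|ξ| + 1) e^{−λ'|ξ|}. -/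
open MeasureTheory

section Stmt17Aux
open Real Set Filter Topology

lemma aux_Ioi (b c : ℝ) (hb : 0 < b) :
    IntegrableOn (fun y : ℝ ↦ Real.exp (-(b * y))) (Set.Ioi c) ∧
    ∫ y in Set.Ioi c, Real.exp (-(b * y)) = Real.exp (-(b * c)) / b := by
  have hd : ∀ x ∈ Ici c, HasDerivAt (fun y : ℝ ↦ -Real.exp (-(b * y)) / b)
      (Real.exp (-(b * x))) x := by
    intro x _
    have h1 : HasDerivAt (fun y : ℝ ↦ -(b * y)) (-b) x := by
      simpa using ((hasDerivAt_id x).const_mul b).fun_neg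
    have h2 : HasDerivAt (fun y : ℝ ↦ -Real.exp (-(b * y)) / b)
        (-(Real.exp (-(b * x)) * -b) / b) x := (h1.exp.fun_neg).div_const b
    convert h2 using 1
    rw [mul_neg, neg_neg, mul_div_cancel_right₀ _ hb.ne']
  have ht : Tendsto (fun y : ℝ ↦ -Real.exp (-(b * y)) / b) atTop (𝓝 0) := by
    have hbt : Tendsto (fun y : ℝ ↦ -(b * y)) atTop atBot :=
      tendsto_neg_atTop_atBot.comp (tendsto_id.const_mul_atTop hb)
    have ht0 : Tendsto (fun y : ℝ ↦ Real.exp (-(b * y))) atTop (𝓝 0) :=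
      Real.tendsto_exp_atBot.comp hbt
    simpa using (ht0.neg).div_const b
  refine ⟨integrableOn_Ioi_deriv_of_nonneg' hd (fun x _ => (Real.exp_pos _).le) ht, ?_⟩
  rw [integral_Ioi_of_hasDerivAt_of_nonneg' hd (fun x _ => (Real.exp_pos _).le) ht]
  ring

lemma aux_Iic (b c : ℝ) (hb : 0 < b) :
    IntegrableOn (fun y : ℝ ↦ Real.exp (b * y)) (Set.Iic c) ∧
    ∫ y in Set.Iic c, Real.exp (b * y) = Real.exp (b * c) / b := by
  obtain ⟨hI, hv⟩ := aux_Ioi b (-c) hb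
  constructor
  · have hmap : (volume.restrict (Set.Ioi (-c))).map Neg.neg = volume.restrict (Set.Iic c) := by
      conv_rhs => rw [← Measure.map_neg_eq_self (volume : Measure ℝ),
        measurableEmbedding_neg.restrict_map]
      simp [neg_preimage, Measure.restrict_congr_set Ioi_ae_eq_Ici.symm]
    rw [IntegrableOn, ← hmap, measurableEmbedding_neg.integrable_map_iff]
    exact hI.congr_fun (by intro y _; simp [Function.comp, mul_neg]) measurableSet_Ioi
  · have := integral_comp_neg_Iic c (fun y : ℝ ↦ Real.exp (-(b * y)))
    simp only [mul_neg, neg_neg] at this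
    rw [← this] at hv
    rw [hv]
    ring_nf


lemma key_nonneg (a : ℝ) (ha : 0 < a) (ξ : ℝ) (hξ : 0 ≤ ξ) :
    Integrable (fun y : ℝ ↦ Real.exp (-(a * |y|) - a * |y + ξ|)) ∧
    ∫ y : ℝ, Real.exp (-(a * |y|) - a * |y + ξ|) = Real.exp (-(a * ξ)) * (ξ + 1 / a) := by
  set f : ℝ → ℝ := fun y ↦ Real.exp (-(a * |y|) - a * |y + ξ|) with hf
  have h2a : 0 < 2 * a := by linarith
  obtain ⟨hI1, hv1⟩ := aux_Iic (2 * a) (-ξ) h2a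
  obtain ⟨hI3, hv3⟩ := aux_Ioi (2 * a) 0 h2a
  have heq1 : EqOn f (fun y ↦ Real.exp (a * ξ) * Real.exp (2 * a * y)) (Iic (-ξ)) := by
    intro y hy
    have hy' : y ≤ -ξ := hy
    simp only [f]
    rw [abs_of_nonpos (by linarith : y ≤ 0), abs_of_nonpos (by linarith : y + ξ ≤ 0),
      ← Real.exp_add]
    ring_nf
  have heq2 : EqOn f (fun _ ↦ Real.exp (-(a * ξ))) (Ioc (-ξ) 0) := by
    intro y hy
    simp only [f]
    rw [abs_of_nonpos (by exact hy.2 : y ≤ 0), abs_of_nonneg (by linarith [hy.1.le] : 0 ≤ y + ξ)]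
    ring_nf
  have heq3 : EqOn f (fun y ↦ Real.exp (-(a * ξ)) * Real.exp (-(2 * a * y))) (Ioi 0) := by
    intro y hy
    have hy' : (0:ℝ) < y := hy
    simp only [f]
    rw [abs_of_nonneg (by linarith : (0:ℝ) ≤ y), abs_of_nonneg (by linarith : 0 ≤ y + ξ),
      ← Real.exp_add]
    ring_nf
  have hfI1 : IntegrableOn f (Iic (-ξ)) :=
    IntegrableOn.congr_fun (hI1.const_mul (Real.exp (a * ξ))) (fun y hy => (heq1 hy).symm)
      measurableSet_Iic
  have hfI2 : IntegrableOn f (Ioc (-ξ) 0) :=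
    IntegrableOn.congr_fun (integrableOn_const measure_Ioc_lt_top.ne)
      (fun y hy => (heq2 hy).symm) measurableSet_Ioc
  have hfI3 : IntegrableOn f (Ioi 0) :=
    IntegrableOn.congr_fun (hI3.const_mul (Real.exp (-(a * ξ)))) (fun y hy => (heq3 hy).symm)
      measurableSet_Ioi
  have hunion : Ioc (-ξ) 0 ∪ Ioi (0:ℝ) = Ioi (-ξ) := Ioc_union_Ioi_eq_Ioi (by linarith)
  have hfIoi : IntegrableOn f (Ioi (-ξ)) := by
    rw [← hunion]; exact hfI2.union hfI3
  have hint : Integrable f := by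
    rw [← integrableOn_univ, ← Iic_union_Ioi (a := -ξ)]
    exact hfI1.union hfIoi
  refine ⟨hint, ?_⟩
  have hsplit1 := intervalIntegral.integral_Iic_add_Ioi (b := -ξ) hfI1 hfIoi
  have hsplit2 : ∫ y in Ioi (-ξ), f y = (∫ y in Ioc (-ξ) 0, f y) + ∫ y in Ioi 0, f y := by
    rw [← hunion, setIntegral_union (Ioc_disjoint_Ioi le_rfl) measurableSet_Ioi hfI2 hfI3]
  have hv1' : ∫ y in Iic (-ξ), f y = Real.exp (-(a * ξ)) / (2 * a) := by
    rw [setIntegral_congr_fun measurableSet_Iic heq1, integral_const_mul, hv1,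
      mul_div_assoc' , ← Real.exp_add]
    ring_nf
  have hv2' : ∫ y in Ioc (-ξ) 0, f y = ξ * Real.exp (-(a * ξ)) := by
    rw [setIntegral_congr_fun measurableSet_Ioc heq2, setIntegral_const, measureReal_def, Real.volume_Ioc,
      smul_eq_mul, ENNReal.toReal_ofReal (by linarith : (0:ℝ) ≤ 0 - -ξ)]
    ring_nf
  have hv3' : ∫ y in Ioi 0, f y = Real.exp (-(a * ξ)) / (2 * a) := by
    rw [setIntegral_congr_fun measurableSet_Ioi heq3, integral_const_mul, hv3]
    norm_num
    ring
  rw [← hsplit1, hsplit2, hv1', hv2', hv3']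
  field_simp
  ring


lemma key (a : ℝ) (ha : 0 < a) (ξ : ℝ) :
    Integrable (fun y : ℝ ↦ Real.exp (-(a * |y|) - a * |y + ξ|)) ∧
    ∫ y : ℝ, Real.exp (-(a * |y|) - a * |y + ξ|) = Real.exp (-(a * |ξ|)) * (|ξ| + 1 / a) := by
  rcases le_or_gt 0 ξ with h | h
  · rw [abs_of_nonneg h]; exact key_nonneg a ha ξ h
  · obtain ⟨hI, hv⟩ := key_nonneg a ha (-ξ) (by linarith)
    have hcomp : (fun y : ℝ ↦ Real.exp (-(a * |y|) - a * |y + ξ|))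
        = (fun y : ℝ ↦ Real.exp (-(a * |y|) - a * |y + -ξ|)) ∘ Neg.neg := by
      funext y
      have h1 : |(-y) + -ξ| = |y + ξ| := by rw [← abs_neg]; ring_nf
      simp only [Function.comp_apply, abs_neg, h1]
    rw [abs_of_neg h, hcomp]
    refine ⟨hI.comp_neg, ?_⟩
    have h2 : (∫ y : ℝ, ((fun z : ℝ ↦ Real.exp (-(a * |z|) - a * |z + -ξ|)) ∘ Neg.neg) y)
        = ∫ y : ℝ, Real.exp (-(a * |y|) - a * |y + -ξ|) :=
      integral_neg_eq_self (fun z : ℝ ↦ Real.exp (-(a * |z|) - a * |z + -ξ|)) volume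
    rw [h2, hv]

end Stmt17Aux
open Real Set Filter Topology in

/-- for `λ, λ' > 0`, `τ ≥ 0` and `ξ ∈ ℝ`:
`∫₀^∞ ∫_ℝ e^{-λs-λ'|y|} e^{-λ(s+τ)-λ'|y+ξ|} dy ds = (e^{-λτ}/(2λ)) e^{-λ'|ξ|}(|ξ| + 1/λ')`;
in particular `∫_ℝ e^{-λ'|y|-λ'|y+ξ|} dy = e^{-λ'|ξ|}(|ξ| + 1/λ')`, and the normalized
autocovariance equals `e^{-λτ}(λ'|ξ| + 1)e^{-λ'|ξ|}`. -/
theorem stmt17 (lam lam' : ℝ) (hlam : 0 < lam) (hlam' : 0 < lam')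
    (τ : ℝ) (hτ : 0 ≤ τ) (ξ : ℝ) :
    (∫ s in Set.Ioi (0 : ℝ),
        ∫ y : ℝ, Real.exp (-(lam * s) - lam' * |y|) *
          Real.exp (-(lam * (s + τ)) - lam' * |y + ξ|) ∂volume) =
      Real.exp (-(lam * τ)) / (2 * lam) * Real.exp (-(lam' * |ξ|)) * (|ξ| + 1 / lam') ∧
    (∫ y : ℝ, Real.exp (-(lam' * |y|) - lam' * |y + ξ|) ∂volume) =
      Real.exp (-(lam' * |ξ|)) * (|ξ| + 1 / lam') ∧
    (Real.exp (-(lam * τ)) / (2 * lam) * Real.exp (-(lam' * |ξ|)) * (|ξ| + 1 / lam')) /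
        (Real.exp (-(lam * 0)) / (2 * lam) * Real.exp (-(lam' * |(0 : ℝ)|)) *
          (|(0 : ℝ)| + 1 / lam')) =
      Real.exp (-(lam * τ)) * (lam' * |ξ| + 1) * Real.exp (-(lam' * |ξ|)) := by
  obtain ⟨hI, hv⟩ := key lam' hlam' ξ
  have h2lam : 0 < 2 * lam := by linarith
  obtain ⟨hsI, hsv⟩ := aux_Ioi (2 * lam) 0 h2lam
  refine ⟨?_, hv, ?_⟩
  · have hinner : ∀ s : ℝ,
        (∫ y : ℝ, Real.exp (-(lam * s) - lam' * |y|) *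
          Real.exp (-(lam * (s + τ)) - lam' * |y + ξ|) ∂volume)
        = (Real.exp (-(lam * τ)) * Real.exp (-(2 * lam * s))) *
            (Real.exp (-(lam' * |ξ|)) * (|ξ| + 1 / lam')) := by
      intro s
      have : ∀ y : ℝ, Real.exp (-(lam * s) - lam' * |y|) *
          Real.exp (-(lam * (s + τ)) - lam' * |y + ξ|)
          = (Real.exp (-(lam * τ)) * Real.exp (-(2 * lam * s))) *
              Real.exp (-(lam' * |y|) - lam' * |y + ξ|) := by
        intro y
        rw [← Real.exp_add, ← Real.exp_add, ← Real.exp_add]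
        congr 1
        ring
      simp_rw [this]
      rw [integral_const_mul, hv]
    simp_rw [hinner]
    rw [integral_mul_const, integral_const_mul, hsv]
    norm_num
    field_simp
  · have h1 : Real.exp (-(lam * 0)) = 1 := by norm_num
    have h2 : Real.exp (-(lam' * |(0:ℝ)|)) = 1 := by norm_num
    rw [h1, h2]
    norm_num
    field_simp
end
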